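/- arXiv:2101.00527 — 5 statements merged into one kernel-verified Lean document; each statement's English description precedes it below -/
import Mathlib

section
/- Let p, x ∈ S and v ∈ T_p with ‖v‖ ≤ π. If ρ(x, exp_p(tv)) ≤ π/2 for every t ∈ [0,1], then the function t ↦ ρ(x, exp_p(tv))² is convex on [0,1]; if moreover v ≠ 0 and ρ(x, exp_p(tv)) < π/2 for every t ∈ [0,1], this function is strictly convex on [0,1]. -/
open MeasureTheory ProbabilityTheory Filter
open scoped InnerProductSpace Topology BigOperators

noncomputable section

variable {H : Type*} [NormedAddCommGroup H] [InnerProductSpace ℝ H]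

/-- Geodesic distance `ρ(f,g) = arccos ⟨f,g⟩` on the unit sphere of `H`. -/
def rho (f g : H) : ℝ := Real.arccos ⟪f, g⟫_ℝ

/-- Riemannian exponential map `exp_p v = cos‖v‖ • p + (sin‖v‖/‖v‖) • v`
(with the convention `exp_p 0 = p`, since `sin 0 / 0 = 0` in Lean). -/
def expS (p v : H) : H := Real.cos ‖v‖ • p + (Real.sin ‖v‖ / ‖v‖) • v

/-- Logarithm map `log_p x = arccos⟨p,x⟩ • u/‖u‖` with `u = x − ⟨p,x⟩ • p`
(junk value `0` when `u = 0`, so `log_p p = 0`). -/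
def logS (p x : H) : H :=
  (Real.arccos ⟪p, x⟫_ℝ / ‖x - ⟪p, x⟫_ℝ • p‖) • (x - ⟪p, x⟫_ℝ • p)

/-- Tangent space `T_p = {v ∈ H : ⟨v,p⟩ = 0}`, a closed subspace of `H`. -/
def Tp (p : H) : Submodule ℝ H := (ℝ ∙ p)ᗮ

instance (p : H) [CompleteSpace H] : CompleteSpace (Tp p) :=
  (Submodule.isClosed_orthogonal _).completeSpace_coe

lemma logS_mem_Tp (p x : H) (hp : ‖p‖ = 1) : logS p x ∈ Tp p := by
  have h0 : ⟪p, x - ⟪p, x⟫_ℝ • p⟫_ℝ = 0 := by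
    rw [inner_sub_right, real_inner_smul_right, real_inner_self_eq_norm_sq, hp]
    ring
  rw [Tp, Submodule.mem_orthogonal_singleton_iff_inner_right, logS,
    real_inner_smul_right, h0, mul_zero]

/-- The logarithm map as a tangent-space-valued map. -/
def logT (p x : H) (hp : ‖p‖ = 1) : Tp p := ⟨logS p x, logS_mem_Tp p x hp⟩

/-- `g_x(v) = ρ(x, exp_p v)²` defined on the tangent space `T_p`. -/
def gfun (p x : H) : Tp p → ℝ := fun v => rho x (expS p (v : H)) ^ 2


private def cf (a b s t : ℝ) : ℝ := a * Real.cos (s * t) + b * Real.sin (s * t)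
private def df (a b s t : ℝ) : ℝ := s * (b * Real.cos (s * t) - a * Real.sin (s * t))
private def F1 (a b s t : ℝ) : ℝ :=
  -(2 * Real.arccos (cf a b s t) * df a b s t) / Real.sqrt (1 - cf a b s t ^ 2)
private def F2 (a b s t : ℝ) : ℝ :=
  2 * df a b s t ^ 2 / (1 - cf a b s t ^ 2) +
    2 * Real.arccos (cf a b s t) * cf a b s t * (s ^ 2 * (1 - (a ^ 2 + b ^ 2))) /
      Real.sqrt (1 - cf a b s t ^ 2) ^ 3

private lemma cf_sq_le (a b s t : ℝ) : cf a b s t ^ 2 ≤ a ^ 2 + b ^ 2 := by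
  have h := Real.sin_sq_add_cos_sq (s * t)
  unfold cf
  nlinarith [sq_nonneg (b * Real.cos (s * t) - a * Real.sin (s * t))]

private lemma df_sq (a b s t : ℝ) :
    df a b s t ^ 2 = s ^ 2 * ((a ^ 2 + b ^ 2) - cf a b s t ^ 2) := by
  have h := Real.sin_sq_add_cos_sq (s * t)
  unfold cf df
  linear_combination (s ^ 2 * (a ^ 2 + b ^ 2)) * h

private lemma hasDerivAt_cf (a b s t : ℝ) : HasDerivAt (cf a b s) (df a b s t) t := by
  have h1 : HasDerivAt (fun u : ℝ => s * u) s t := by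
    simpa using (hasDerivAt_id t).const_mul s
  have hcos : HasDerivAt (fun u : ℝ => Real.cos (s * u)) (-Real.sin (s * t) * s) t :=
    (Real.hasDerivAt_cos (s * t)).comp t h1
  have hsin : HasDerivAt (fun u : ℝ => Real.sin (s * u)) (Real.cos (s * t) * s) t :=
    (Real.hasDerivAt_sin (s * t)).comp t h1
  have h := (hcos.const_mul a).add (hsin.const_mul b)
  have h2 : df a b s t = a * (-Real.sin (s * t) * s) + b * (Real.cos (s * t) * s) := by
    unfold df; ring
  rw [h2]; exact h

private lemma hasDerivAt_df (a b s t : ℝ) :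
    HasDerivAt (df a b s) (-(s ^ 2) * cf a b s t) t := by
  have h1 : HasDerivAt (fun u : ℝ => s * u) s t := by
    simpa using (hasDerivAt_id t).const_mul s
  have hcos : HasDerivAt (fun u : ℝ => Real.cos (s * u)) (-Real.sin (s * t) * s) t :=
    (Real.hasDerivAt_cos (s * t)).comp t h1
  have hsin : HasDerivAt (fun u : ℝ => Real.sin (s * u)) (Real.cos (s * t) * s) t :=
    (Real.hasDerivAt_sin (s * t)).comp t h1
  have h := ((hcos.const_mul b).sub (hsin.const_mul a)).const_mul s
  have h2 : -(s ^ 2) * cf a b s t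
      = s * (b * (-Real.sin (s * t) * s) - a * (Real.cos (s * t) * s)) := by
    unfold cf; ring
  rw [h2]; exact h

private lemma caseA_aux (a b s : ℝ) (hr : a ^ 2 + b ^ 2 < 1) (t : ℝ) :
    HasDerivAt (fun u => Real.arccos (cf a b s u) ^ 2) (F1 a b s t) t ∧
      HasDerivAt (F1 a b s) (F2 a b s t) t := by
  have hc2 : cf a b s t ^ 2 < 1 := lt_of_le_of_lt (cf_sq_le a b s t) hr
  have h1c : 0 < 1 - cf a b s t ^ 2 := by nlinarith
  have hW : 0 < Real.sqrt (1 - cf a b s t ^ 2) := Real.sqrt_pos.2 h1c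
  have hWne : Real.sqrt (1 - cf a b s t ^ 2) ≠ 0 := hW.ne'
  have hW2 : Real.sqrt (1 - cf a b s t ^ 2) ^ 2 = 1 - cf a b s t ^ 2 := Real.sq_sqrt h1c.le
  have hne1 : cf a b s t ≠ 1 := by nlinarith
  have hnem1 : cf a b s t ≠ -1 := by nlinarith
  have hA : HasDerivAt (fun u => Real.arccos (cf a b s u))
      (-(1 / Real.sqrt (1 - cf a b s t ^ 2)) * df a b s t) t :=
    (Real.hasDerivAt_arccos hnem1 hne1).comp t (hasDerivAt_cf a b s t)
  constructor
  · have h := hA.pow 2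
    have heq : F1 a b s t = (2 : ℕ) * Real.arccos (cf a b s t) ^ (2 - 1) *
        (-(1 / Real.sqrt (1 - cf a b s t ^ 2)) * df a b s t) := by
      unfold F1; push_cast; field_simp
    rw [heq]; exact h
  · have hg : HasDerivAt (fun u : ℝ => 1 - cf a b s u ^ 2)
        (-(2 * cf a b s t ^ 1 * df a b s t)) t :=
      (((hasDerivAt_cf a b s t).pow 2)).const_sub 1
    have hWd : HasDerivAt (fun u => Real.sqrt (1 - cf a b s u ^ 2))
        (1 / (2 * Real.sqrt (1 - cf a b s t ^ 2)) * -(2 * cf a b s t ^ 1 * df a b s t)) t :=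
      (Real.hasDerivAt_sqrt h1c.ne').comp t hg
    have hN : HasDerivAt (fun u => -(2 * Real.arccos (cf a b s u) * df a b s u))
        (-((2 * (-(1 / Real.sqrt (1 - cf a b s t ^ 2)) * df a b s t)) * df a b s t +
          (2 * Real.arccos (cf a b s t)) * (-(s ^ 2) * cf a b s t))) t :=
      ((hA.const_mul 2).mul (hasDerivAt_df a b s t)).neg
    have h := hN.div hWd hWne
    have heq : F2 a b s t =
        (-((2 * (-(1 / Real.sqrt (1 - cf a b s t ^ 2)) * df a b s t)) * df a b s t +
            (2 * Real.arccos (cf a b s t)) * (-(s ^ 2) * cf a b s t)) *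
              Real.sqrt (1 - cf a b s t ^ 2) -
            -(2 * Real.arccos (cf a b s t) * df a b s t) *
              (1 / (2 * Real.sqrt (1 - cf a b s t ^ 2)) *
                -(2 * cf a b s t ^ 1 * df a b s t))) /
          Real.sqrt (1 - cf a b s t ^ 2) ^ 2 := by
      have hd2 := df_sq a b s t
      unfold F2
      set A := Real.arccos (cf a b s t) with hA'
      set C := cf a b s t with hC'
      set D := df a b s t with hD'
      set W := Real.sqrt (1 - C ^ 2) with hW'
      clear_value A C D W
      field_simp
      linear_combination (D^2*W - C*A*s^2*(1-C^2)) * hW2 +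
        (C*A*(1-C^2)) * hd2
    rw [heq]; exact h

private lemma iter2 (F : ℝ → ℝ) : deriv^[2] F = deriv (deriv F) := by
  rw [show (2 : ℕ) = 1 + 1 from rfl, Function.iterate_succ_apply', Function.iterate_one]

private lemma caseA_convex (a b s : ℝ) (hr : a ^ 2 + b ^ 2 < 1)
    (hc : ∀ t ∈ Set.Icc (0 : ℝ) 1, 0 ≤ cf a b s t) :
    ConvexOn ℝ (Set.Icc (0 : ℝ) 1) (fun t => Real.arccos (cf a b s t) ^ 2) := by
  have hder : deriv (fun u => Real.arccos (cf a b s u) ^ 2) = F1 a b s :=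
    funext fun t => ((caseA_aux a b s hr t).1).deriv
  apply convexOn_of_deriv2_nonneg (convex_Icc 0 1)
  · exact fun t _ =>
      ((caseA_aux a b s hr t).1).differentiableAt.continuousAt.continuousWithinAt
  · exact fun t _ => ((caseA_aux a b s hr t).1).differentiableAt.differentiableWithinAt
  · rw [hder]
    exact fun t _ => ((caseA_aux a b s hr t).2).differentiableAt.differentiableWithinAt
  · intro y hy
    have hy' : y ∈ Set.Icc (0 : ℝ) 1 :=
      interior_subset hy
    rw [iter2, hder, ((caseA_aux a b s hr y).2).deriv]
    have hc2 : cf a b s y ^ 2 < 1 := lt_of_le_of_lt (cf_sq_le a b s y) hr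
    have h1c : 0 < 1 - cf a b s y ^ 2 := by nlinarith
    unfold F2
    apply add_nonneg
    · positivity
    · apply div_nonneg _ (by positivity)
      have h1 := Real.arccos_nonneg (cf a b s y)
      have h2 := hc y hy'
      have h3 : (0:ℝ) ≤ s ^ 2 * (1 - (a ^ 2 + b ^ 2)) :=
        mul_nonneg (sq_nonneg s) (by linarith)
      exact mul_nonneg (mul_nonneg (mul_nonneg (by norm_num) h1) h2) h3

private lemma caseA_strict (a b s : ℝ) (hr : a ^ 2 + b ^ 2 < 1) (hs : s ≠ 0)
    (hc : ∀ t ∈ Set.Icc (0 : ℝ) 1, 0 < cf a b s t) :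
    StrictConvexOn ℝ (Set.Icc (0 : ℝ) 1) (fun t => Real.arccos (cf a b s t) ^ 2) := by
  have hder : deriv (fun u => Real.arccos (cf a b s u) ^ 2) = F1 a b s :=
    funext fun t => ((caseA_aux a b s hr t).1).deriv
  apply strictConvexOn_of_deriv2_pos (convex_Icc 0 1)
  · exact fun t _ =>
      ((caseA_aux a b s hr t).1).differentiableAt.continuousAt.continuousWithinAt
  · intro y hy
    rw [interior_Icc] at hy
    have hy' : y ∈ Set.Icc (0 : ℝ) 1 := Set.mem_Icc_of_Ioo hy
    rw [iter2, hder, ((caseA_aux a b s hr y).2).deriv]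
    have hc2 : cf a b s y ^ 2 < 1 := lt_of_le_of_lt (cf_sq_le a b s y) hr
    have h1c : 0 < 1 - cf a b s y ^ 2 := by nlinarith
    have hC1 : cf a b s y < 1 := by nlinarith
    have hA : 0 < Real.arccos (cf a b s y) := Real.arccos_pos.2 hC1
    have hC0 : 0 < cf a b s y := hc y hy'
    unfold F2
    apply add_pos_of_nonneg_of_pos
    · positivity
    · apply div_pos _ (by positivity)
      have hs2 : 0 < s ^ 2 := by positivity
      exact mul_pos (mul_pos (mul_pos (by norm_num) hA) hC0)
        (mul_pos hs2 (by linarith))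

private lemma caseB_eq (a b s : ℝ) (hs : 0 ≤ s) (hr : a ^ 2 + b ^ 2 = 1)
    (hc : ∀ t ∈ Set.Icc (0 : ℝ) 1, 0 ≤ cf a b s t) :
    ∀ t ∈ Set.Icc (0 : ℝ) 1,
      Real.arccos (cf a b s t) ^ 2 = (s * t - Real.arcsin b) ^ 2 := by
  have hb1 : b ≤ 1 := by nlinarith
  have hbm1 : -1 ≤ b := by nlinarith
  have ha0 : 0 ≤ a := by
    have := hc 0 ⟨le_refl 0, zero_le_one⟩
    simpa [cf] using this
  have hcosφ : Real.cos (Real.arcsin b) = a := by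
    rw [Real.cos_arcsin, show (1 : ℝ) - b ^ 2 = a ^ 2 by nlinarith]
    exact Real.sqrt_sq ha0
  have hsinφ : Real.sin (Real.arcsin b) = b := Real.sin_arcsin hbm1 hb1
  set φ := Real.arcsin b with hφ'
  have hφ1 : -(Real.pi / 2) ≤ φ := Real.neg_pi_div_two_le_arcsin b
  have hφ2 : φ ≤ Real.pi / 2 := Real.arcsin_le_pi_div_two b
  have hcf : ∀ t, cf a b s t = Real.cos (s * t - φ) := by
    intro t
    rw [Real.cos_sub, hcosφ, hsinφ]; unfold cf; ring
  have hπ := Real.pi_pos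
  have hup : ∀ t ∈ Set.Icc (0 : ℝ) 1, s * t - φ ≤ Real.pi / 2 := by
    intro t ht
    by_contra hgt
    push_neg at hgt
    have hs0 : 0 < s := by
      rcases hs.lt_or_eq with h | h
      · exact h
      · exfalso
        rw [← h, zero_mul] at hgt
        linarith
    set δ := min (s * t - φ - Real.pi / 2) (Real.pi / 2) with hδ'
    have hδ0 : 0 < δ := lt_min (by linarith) (by linarith)
    have hδπ : δ ≤ Real.pi / 2 := min_le_right _ _
    have hδle : δ ≤ s * t - φ - Real.pi / 2 := min_le_left _ _
    set t' := (φ + Real.pi / 2 + δ) / s with ht''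
    have hst' : s * t' - φ = Real.pi / 2 + δ := by
      rw [ht'']; field_simp; ring
    have ht'0 : 0 ≤ t' := div_nonneg (by linarith) hs0.le
    have ht'le : t' ≤ t := by
      rw [ht'', div_le_iff₀ hs0]
      nlinarith
    have hmem : t' ∈ Set.Icc (0 : ℝ) 1 := ⟨ht'0, le_trans ht'le ht.2⟩
    have hcc := hc t' hmem
    rw [hcf t', hst'] at hcc
    have hneg : Real.cos (Real.pi / 2 + δ) < 0 :=
      Real.cos_neg_of_pi_div_two_lt_of_lt (by linarith) (by linarith)
    linarith
  intro t ht
  have hst0 : 0 ≤ s * t := mul_nonneg hs ht.1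
  have h1 : -(Real.pi / 2) ≤ s * t - φ := by linarith
  have h2 := hup t ht
  rw [hcf]
  rcases le_or_gt 0 (s * t - φ) with h | h
  · rw [Real.arccos_cos h (by linarith)]
  · rw [show s * t - φ = -(φ - s * t) by ring, Real.cos_neg,
      Real.arccos_cos (by linarith) (by linarith)]
    ring

private lemma quad_convexOn (s φ : ℝ) :
    ConvexOn ℝ (Set.Icc (0 : ℝ) 1) (fun t => (s * t - φ) ^ 2) := by
  refine ⟨convex_Icc 0 1, fun x _ y _ α β hα hβ hαβ => ?_⟩
  simp only [smul_eq_mul]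
  have hb : β = 1 - α := by linarith
  subst hb
  nlinarith [mul_nonneg hα hβ, sq_nonneg (s * x - s * y)]

private lemma quad_strictConvexOn (s φ : ℝ) (hs : s ≠ 0) :
    StrictConvexOn ℝ (Set.Icc (0 : ℝ) 1) (fun t => (s * t - φ) ^ 2) := by
  refine ⟨convex_Icc 0 1, fun x _ y _ hxy α β hα hβ hαβ => ?_⟩
  simp only [smul_eq_mul]
  have h1 : s * x - s * y ≠ 0 := fun h => hxy (by
    have : s * (x - y) = 0 := by linarith
    rcases mul_eq_zero.1 this with h' | h'
    · exact absurd h' hs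
    · linarith [sub_eq_zero.1 h'])
  have h2 : 0 < (s * x - s * y) ^ 2 :=
    lt_of_le_of_ne (sq_nonneg _) (Ne.symm (pow_ne_zero 2 h1))
  have hb : β = 1 - α := by linarith
  subst hb
  nlinarith [mul_pos hα hβ, h2]

private lemma convexOn_congr_aux {f g : ℝ → ℝ} (h : ConvexOn ℝ (Set.Icc (0 : ℝ) 1) g)
    (he : ∀ x ∈ Set.Icc (0 : ℝ) 1, f x = g x) :
    ConvexOn ℝ (Set.Icc (0 : ℝ) 1) f := by
  refine ⟨h.1, fun x hx y hy α β hα hβ hαβ => ?_⟩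
  rw [he _ hx, he _ hy, he _ (h.1 hx hy hα hβ hαβ)]
  exact h.2 hx hy hα hβ hαβ

private lemma strictConvexOn_congr_aux {f g : ℝ → ℝ}
    (h : StrictConvexOn ℝ (Set.Icc (0 : ℝ) 1) g)
    (he : ∀ x ∈ Set.Icc (0 : ℝ) 1, f x = g x) :
    StrictConvexOn ℝ (Set.Icc (0 : ℝ) 1) f := by
  refine ⟨h.1, fun x hx y hy hxy α β hα hβ hαβ => ?_⟩
  rw [he _ hx, he _ hy, he _ (h.1 hx hy hα.le hβ.le hαβ)]
  exact h.2 hx hy hxy hα hβ hαβ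


private lemma inner_expS {H : Type*} [NormedAddCommGroup H] [InnerProductSpace ℝ H]
    (p x v : H) (hv0 : v ≠ 0) :
    ∀ t ∈ Set.Icc (0 : ℝ) 1,
      ⟪x, expS p (t • v)⟫_ℝ = cf ⟪x, p⟫_ℝ (⟪x, v⟫_ℝ / ‖v‖) ‖v‖ t := by
  intro t ht
  rcases eq_or_lt_of_le ht.1 with h0 | h0
  · rw [← h0]
    simp [expS, cf]
  · have hs0 : 0 < ‖v‖ := norm_pos_iff.2 hv0
    have hnorm : ‖t • v‖ = ‖v‖ * t := by
      rw [norm_smul, Real.norm_eq_abs, abs_of_pos h0]; ring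
    rw [expS, hnorm, inner_add_right, real_inner_smul_right, real_inner_smul_right,
      real_inner_smul_right]
    unfold cf
    field_simp

private lemma bessel {H : Type*} [NormedAddCommGroup H] [InnerProductSpace ℝ H]
    (p x v : H) (hp : ‖p‖ = 1) (hx : ‖x‖ = 1) (hv : ⟪v, p⟫_ℝ = 0) (hv0 : v ≠ 0) :
    ⟪x, p⟫_ℝ ^ 2 + (⟪x, v⟫_ℝ / ‖v‖) ^ 2 ≤ 1 := by
  set a := ⟪x, p⟫_ℝ with ha'
  set b := ⟪x, v⟫_ℝ / ‖v‖ with hb'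
  have hs0 : 0 < ‖v‖ := norm_pos_iff.2 hv0
  have key : (0 : ℝ) ≤ ‖x - a • p - b • (‖v‖⁻¹ • v)‖ ^ 2 := sq_nonneg _
  have hexp : ‖x - a • p - b • (‖v‖⁻¹ • v)‖ ^ 2 = 1 - a ^ 2 - b ^ 2 := by
    rw [← real_inner_self_eq_norm_sq]
    have hxx : ⟪x, x⟫_ℝ = 1 := by rw [real_inner_self_eq_norm_sq, hx]; norm_num
    have hpp : ⟪p, p⟫_ℝ = 1 := by rw [real_inner_self_eq_norm_sq, hp]; norm_num
    have hvv : ⟪v, v⟫_ℝ = ‖v‖ ^ 2 := real_inner_self_eq_norm_sq v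
    have hpx : ⟪p, x⟫_ℝ = a := by rw [real_inner_comm]
    have hxv : ⟪x, v⟫_ℝ = b * ‖v‖ := by rw [hb']; field_simp
    have hvx : ⟪v, x⟫_ℝ = b * ‖v‖ := by rw [real_inner_comm]; exact hxv
    have hpv : ⟪p, v⟫_ℝ = 0 := by rw [real_inner_comm]; exact hv
    simp only [inner_sub_left, inner_sub_right, real_inner_smul_left, real_inner_smul_right,
      hxx, hpp, hvv, ← ha', hpx, hxv, hvx, hv, hpv]
    field_simp
    ring
  nlinarith [key, hexp]

/-- convexity of `t ↦ ρ(x, exp_p(tv))²` along geodesics within a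
quarter-circle neighborhood, and strict convexity inside. -/
theorem sq_dist_convex_along_geodesic (p x v : H) (hp : ‖p‖ = 1) (hx : ‖x‖ = 1)
    (hv : ⟪v, p⟫_ℝ = 0) (hvπ : ‖v‖ ≤ Real.pi) :
    ((∀ t ∈ Set.Icc (0 : ℝ) 1, rho x (expS p (t • v)) ≤ Real.pi / 2) →
      ConvexOn ℝ (Set.Icc (0 : ℝ) 1) (fun t : ℝ => rho x (expS p (t • v)) ^ 2)) ∧
    (v ≠ 0 → (∀ t ∈ Set.Icc (0 : ℝ) 1, rho x (expS p (t • v)) < Real.pi / 2) →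
      StrictConvexOn ℝ (Set.Icc (0 : ℝ) 1) (fun t : ℝ => rho x (expS p (t • v)) ^ 2)) := by
  constructor
  · intro hyp
    by_cases hv0 : v = 0
    · subst hv0
      simp only [smul_zero]
      exact convexOn_const _ (convex_Icc 0 1)
    · set a := ⟪x, p⟫_ℝ with ha'
      set b := ⟪x, v⟫_ℝ / ‖v‖ with hb'
      set s := ‖v‖ with hs'
      have hs0 : 0 < s := norm_pos_iff.2 hv0
      have hkey := inner_expS p x v hv0
      have hrr := bessel p x v hp hx hv hv0
      have hrho : ∀ t ∈ Set.Icc (0 : ℝ) 1,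
          rho x (expS p (t • v)) = Real.arccos (cf a b s t) := by
        intro t ht
        unfold rho
        rw [hkey t ht]
      have hc : ∀ t ∈ Set.Icc (0 : ℝ) 1, 0 ≤ cf a b s t := by
        intro t ht
        have h := hyp t ht
        rw [hrho t ht] at h
        exact Real.arccos_le_pi_div_two.1 h
      have hg : ConvexOn ℝ (Set.Icc (0 : ℝ) 1) (fun t => Real.arccos (cf a b s t) ^ 2) := by
        rcases lt_or_eq_of_le hrr with h | h
        · exact caseA_convex a b s h hc
        · exact convexOn_congr_aux (quad_convexOn s (Real.arcsin b))
            (caseB_eq a b s hs0.le h hc)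
      exact convexOn_congr_aux hg (fun t ht => by rw [hrho t ht])
  · intro hv0 hyp
    set a := ⟪x, p⟫_ℝ with ha'
    set b := ⟪x, v⟫_ℝ / ‖v‖ with hb'
    set s := ‖v‖ with hs'
    have hs0 : 0 < s := norm_pos_iff.2 hv0
    have hkey := inner_expS p x v hv0
    have hrr := bessel p x v hp hx hv hv0
    have hrho : ∀ t ∈ Set.Icc (0 : ℝ) 1,
        rho x (expS p (t • v)) = Real.arccos (cf a b s t) := by
      intro t ht
      unfold rho
      rw [hkey t ht]
    have hc : ∀ t ∈ Set.Icc (0 : ℝ) 1, 0 < cf a b s t := by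
      intro t ht
      have h := hyp t ht
      rw [hrho t ht] at h
      exact Real.arccos_lt_pi_div_two.1 h
    have hg : StrictConvexOn ℝ (Set.Icc (0 : ℝ) 1)
        (fun t => Real.arccos (cf a b s t) ^ 2) := by
      rcases lt_or_eq_of_le hrr with h | h
      · exact caseA_strict a b s h hs0.ne' hc
      · exact strictConvexOn_congr_aux (quad_strictConvexOn s (Real.arcsin b) hs0.ne')
          (caseB_eq a b s hs0.le h (fun t ht => (hc t ht).le))
    exact strictConvexOn_congr_aux hg (fun t ht => by rw [hrho t ht])
end
end

section
/- Assume (A1). Then there exists a unique minimizer μ ∈ S of the Fréchet functional M(p) = E[ρ(X,p)²]; that is, the Fréchet (intrinsic) mean of X on S exists and is unique. -/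
open MeasureTheory ProbabilityTheory Filter
open scoped InnerProductSpace Topology BigOperators

noncomputable section

variable {H : Type*} [NormedAddCommGroup H] [InnerProductSpace ℝ H]

section Scalar
open Real Set


/-- `acsq t = arccos t ^ 2`. -/
private def acsq (t : ℝ) : ℝ := Real.arccos t ^ 2

private lemma antitone_arccos : Antitone Real.arccos := fun x y h => by
  unfold Real.arccos
  exact sub_le_sub_left (Real.monotone_arcsin h) _

private lemma acsq_antitone : Antitone acsq := fun x y h => by
  unfold acsq
  exact pow_le_pow_left₀ (Real.arccos_nonneg _) (_root_.antitone_arccos h) 2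

private lemma acsq_zero : acsq 0 = π ^ 2 / 4 := by
  unfold acsq
  rw [Real.arccos_zero]
  ring

private lemma acsq_nonneg (t : ℝ) : 0 ≤ acsq t := sq_nonneg _

private lemma acsq_le_sq_pi (t : ℝ) : acsq t ≤ π ^ 2 := by
  unfold acsq
  have h1 := Real.arccos_nonneg t
  have h2 := Real.arccos_le_pi t
  nlinarith

private lemma acsq_inj {a b : ℝ} (ha : a ∈ Icc (-1:ℝ) 1) (hb : b ∈ Icc (-1:ℝ) 1)
    (h : acsq a = acsq b) : a = b := by
  have h' : Real.arccos a = Real.arccos b := by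
    have := Real.arccos_nonneg a
    have := Real.arccos_nonneg b
    unfold acsq at h
    nlinarith
  calc a = Real.cos (Real.arccos a) := (Real.cos_arccos ha.1 ha.2).symm
    _ = Real.cos (Real.arccos b) := by rw [h']
    _ = b := Real.cos_arccos hb.1 hb.2

private lemma sqrt_one_sub_sq_pos {t : ℝ} (ht : t ∈ Ioo (-1:ℝ) 1) : 0 < Real.sqrt (1 - t^2) := by
  apply Real.sqrt_pos.2; nlinarith [ht.1, ht.2]

private lemma hasDerivAt_sqrt_one_sub_sq {t : ℝ} (ht : t ∈ Ioo (-1:ℝ) 1) :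
    HasDerivAt (fun t : ℝ => Real.sqrt (1 - t^2)) (-t / Real.sqrt (1 - t^2)) t := by
  have h0 : (1 : ℝ) - t ^ 2 ≠ 0 := by nlinarith [ht.1, ht.2]
  have h1 : HasDerivAt (fun t : ℝ => 1 - t^2) (-(2*t)) t := by
    simpa using ((hasDerivAt_pow 2 t).const_sub 1)
  have h2 := (Real.hasDerivAt_sqrt h0).comp t h1
  refine h2.congr_deriv ?_
  have hs := sqrt_one_sub_sq_pos ht
  field_simp

/-- `g t = √(1-t²) - t · arccos t` is nonnegative on `[-1,1]`. -/
private lemma g_nonneg {t : ℝ} (ht : t ∈ Icc (-1:ℝ) 1) :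
    0 ≤ Real.sqrt (1 - t^2) - t * Real.arccos t := by
  set g : ℝ → ℝ := fun t => Real.sqrt (1 - t^2) - t * Real.arccos t with hg
  have hanti : AntitoneOn g (Icc (-1:ℝ) 1) := by
    apply antitoneOn_of_hasDerivWithinAt_nonpos (convex_Icc _ _)
      (f' := fun t => -Real.arccos t)
    · apply ContinuousOn.sub
      · exact (Real.continuous_sqrt.comp (by continuity)).continuousOn
      · exact (continuous_id.mul Real.continuous_arccos).continuousOn
    · intro x hx
      rw [interior_Icc] at hx
      have h1 : HasDerivAt g (-x / Real.sqrt (1 - x^2) -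
          (1 * Real.arccos x + x * (-(1 / Real.sqrt (1 - x ^ 2))))) x := by
        have := (hasDerivAt_sqrt_one_sub_sq hx).sub
          ((hasDerivAt_id x).mul (Real.hasDerivAt_arccos (by linarith [hx.1]) (by linarith [hx.2])))
        exact this
      have he : -x / Real.sqrt (1 - x^2) - (1 * Real.arccos x + x * (-(1 / Real.sqrt (1 - x ^ 2))))
          = -Real.arccos x := by
        have hs := (sqrt_one_sub_sq_pos hx).ne'
        field_simp
        ring
      rw [he] at h1
      exact h1.hasDerivWithinAt
    · intro x hx
      rw [interior_Icc] at hx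
      simp [Real.arccos_nonneg]
  have h1 : g 1 = 0 := by simp [hg, Real.arccos_one]
  have := hanti ht (by constructor <;> norm_num) ht.2
  rw [h1] at this
  exact this

/-- `√(1-t²) ≤ arccos t` on `[-1,1]`. -/
private lemma sqrt_le_arccos {t : ℝ} (ht : t ∈ Icc (-1:ℝ) 1) :
    Real.sqrt (1 - t^2) ≤ Real.arccos t := by
  set u : ℝ → ℝ := fun t => Real.arccos t - Real.sqrt (1 - t^2) with hu
  have hanti : AntitoneOn u (Icc (-1:ℝ) 1) := by
    apply antitoneOn_of_hasDerivWithinAt_nonpos (convex_Icc _ _)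
      (f' := fun t => (t - 1) / Real.sqrt (1 - t^2))
    · exact Real.continuous_arccos.continuousOn.sub
        (Real.continuous_sqrt.comp (by continuity)).continuousOn
    · intro x hx
      rw [interior_Icc] at hx
      have h1 : HasDerivAt u (-(1 / Real.sqrt (1 - x ^ 2)) - (-x / Real.sqrt (1 - x^2))) x :=
        (Real.hasDerivAt_arccos (by linarith [hx.1]) (by linarith [hx.2])).sub
          (hasDerivAt_sqrt_one_sub_sq hx)
      have he : -(1 / Real.sqrt (1 - x ^ 2)) - (-x / Real.sqrt (1 - x^2))
          = (x - 1) / Real.sqrt (1 - x^2) := by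
        have hs := (sqrt_one_sub_sq_pos hx).ne'
        field_simp
        ring
      rw [he] at h1
      exact h1.hasDerivWithinAt
    · intro x hx
      rw [interior_Icc] at hx
      apply div_nonpos_of_nonpos_of_nonneg (by linarith [hx.2]) (Real.sqrt_nonneg _)
  have h1 : u 1 = 0 := by simp [hu, Real.arccos_one]
  have := hanti ht (by constructor <;> norm_num) ht.2
  rw [h1] at this
  simpa [hu, sub_nonneg] using this

/-- The function `a t = arccos t / √(1-t²)` is antitone on `(-1,1)`. -/
private lemma afun_antitoneOn :
    AntitoneOn (fun t : ℝ => Real.arccos t / Real.sqrt (1 - t^2)) (Ioo (-1:ℝ) 1) := by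
  apply antitoneOn_of_hasDerivWithinAt_nonpos (convex_Ioo _ _)
    (f' := fun t => (-(1 / Real.sqrt (1 - t ^ 2)) * Real.sqrt (1 - t^2) -
      Real.arccos t * (-t / Real.sqrt (1 - t^2))) / (Real.sqrt (1 - t^2))^2)
  · apply ContinuousOn.div Real.continuous_arccos.continuousOn
      (Real.continuous_sqrt.comp (by continuity)).continuousOn
    intro x hx
    exact (sqrt_one_sub_sq_pos hx).ne'
  · intro x hx
    rw [interior_Ioo] at hx
    exact (((Real.hasDerivAt_arccos (by linarith [hx.1]) (by linarith [hx.2])).div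
      (hasDerivAt_sqrt_one_sub_sq hx) (sqrt_one_sub_sq_pos hx).ne')).hasDerivWithinAt
  · intro x hx
    rw [interior_Ioo] at hx
    apply div_nonpos_of_nonpos_of_nonneg _ (sq_nonneg _)
    have hs := sqrt_one_sub_sq_pos hx
    have hg := g_nonneg (Ioo_subset_Icc_self hx)
    have he : -(1 / Real.sqrt (1 - x ^ 2)) * Real.sqrt (1 - x^2) -
        Real.arccos x * (-x / Real.sqrt (1 - x^2))
        = (x * Real.arccos x - Real.sqrt (1 - x^2)) / Real.sqrt (1 - x^2) := by
      field_simp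
      ring
    rw [he]
    apply div_nonpos_of_nonpos_of_nonneg (by linarith) (Real.sqrt_nonneg _)

private lemma hasDerivAt_acsq {t : ℝ} (ht : t ∈ Ioo (-1:ℝ) 1) :
    HasDerivAt acsq (-2 * (Real.arccos t / Real.sqrt (1 - t^2))) t := by
  have h1 := (Real.hasDerivAt_arccos (by linarith [ht.1]) (by linarith [ht.2])).pow 2
  have he : (2:ℕ) * Real.arccos t ^ (2-1) * (-(1 / Real.sqrt (1 - t ^ 2)))
      = -2 * (Real.arccos t / Real.sqrt (1 - t^2)) := by
    have hs := (sqrt_one_sub_sq_pos ht).ne'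
    field_simp
    norm_num
  rw [he] at h1
  exact h1

private lemma acsq_convexOn : ConvexOn ℝ (Icc (-1:ℝ) 1) acsq := by
  apply MonotoneOn.convexOn_of_deriv (convex_Icc _ _)
  · exact ((Real.continuous_arccos).pow 2).continuousOn
  · intro x hx
    rw [interior_Icc] at hx
    exact (hasDerivAt_acsq hx).differentiableAt.differentiableWithinAt
  · rw [interior_Icc]
    intro x hx y hy hxy
    rw [(hasDerivAt_acsq hx).deriv, (hasDerivAt_acsq hy).deriv]
    have := afun_antitoneOn hx hy hxy
    dsimp only at this
    linarith

/-- `acsq t + 2t` is antitone on `[-1,1]`. -/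
private lemma acsq_add_two_antitoneOn :
    AntitoneOn (fun t : ℝ => acsq t + 2 * t) (Icc (-1:ℝ) 1) := by
  apply antitoneOn_of_hasDerivWithinAt_nonpos (convex_Icc _ _)
    (f' := fun t => -2 * (Real.arccos t / Real.sqrt (1 - t^2)) + 2)
  · exact (((Real.continuous_arccos).pow 2).continuousOn).add (by fun_prop)
  · intro x hx
    rw [interior_Icc] at hx
    have h := ((hasDerivAt_acsq hx).add ((hasDerivAt_id x).const_mul 2)).hasDerivWithinAt
      (s := interior (Icc (-1:ℝ) 1))
    exact h.congr_deriv (by ring)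
  · intro x hx
    rw [interior_Icc] at hx
    have hs := sqrt_one_sub_sq_pos hx
    have h1 := sqrt_le_arccos (Ioo_subset_Icc_self hx)
    have h2 : (1:ℝ) ≤ Real.arccos x / Real.sqrt (1 - x^2) := (one_le_div hs).2 h1
    linarith

/-- Tangent line bound: `π²/4 - π t ≤ acsq t` on `[-1,1]`. -/
private lemma tangent_le_acsq {t : ℝ} (ht : t ∈ Icc (-1:ℝ) 1) :
    π^2/4 - π * t ≤ acsq t := by
  set φ : ℝ → ℝ := fun t => acsq t + π * t with hφ
  have hcont : ContinuousOn φ (Icc (-1:ℝ) 1) :=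
    (((Real.continuous_arccos).pow 2).continuousOn).add (by fun_prop)
  have key : ∀ x ∈ Ioo (-1:ℝ) 1,
      HasDerivAt φ (-2 * (Real.arccos x / Real.sqrt (1 - x^2)) + π) x := by
    intro x hx
    have h := (hasDerivAt_acsq hx).add ((hasDerivAt_id x).const_mul π)
    exact h.congr_deriv (by ring)
  have ha0 : (fun t : ℝ => Real.arccos t / Real.sqrt (1 - t^2)) 0 = π / 2 := by
    norm_num [Real.arccos_zero]
  have hφ0 : φ 0 = π^2/4 := by simp [hφ, acsq_zero]
  rcases le_or_gt 0 t with h0 | h0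
  · -- monotone on [0,1]
    have hm : MonotoneOn φ (Icc (0:ℝ) 1) := by
      apply monotoneOn_of_hasDerivWithinAt_nonneg (convex_Icc _ _)
        (f' := fun t => -2 * (Real.arccos t / Real.sqrt (1 - t^2)) + π)
      · exact hcont.mono (Icc_subset_Icc (by norm_num) le_rfl)
      · intro x hx
        rw [interior_Icc] at hx
        exact (key x ⟨by linarith [hx.1], hx.2⟩).hasDerivWithinAt
      · intro x hx
        rw [interior_Icc] at hx
        have := afun_antitoneOn (show (0:ℝ) ∈ Ioo (-1:ℝ) 1 by norm_num)
          ⟨by linarith [hx.1], hx.2⟩ hx.1.le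
        rw [ha0] at this
        dsimp only at this
        linarith
    have := hm ⟨le_rfl, by norm_num⟩ ⟨h0, ht.2⟩ h0
    rw [hφ0] at this
    simp only [hφ] at this
    linarith
  · -- antitone on [-1,0]
    have hm : AntitoneOn φ (Icc (-1:ℝ) 0) := by
      apply antitoneOn_of_hasDerivWithinAt_nonpos (convex_Icc _ _)
        (f' := fun t => -2 * (Real.arccos t / Real.sqrt (1 - t^2)) + π)
      · exact hcont.mono (Icc_subset_Icc le_rfl (by norm_num))
      · intro x hx
        rw [interior_Icc] at hx
        exact (key x ⟨hx.1, by linarith [hx.2]⟩).hasDerivWithinAt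
      · intro x hx
        rw [interior_Icc] at hx
        have := afun_antitoneOn ⟨hx.1, by linarith [hx.2]⟩
          (show (0:ℝ) ∈ Ioo (-1:ℝ) 1 by norm_num) hx.2.le
        rw [ha0] at this
        dsimp only at this
        linarith
    have := hm ⟨ht.1, h0.le⟩ ⟨by norm_num, le_rfl⟩ h0.le
    rw [hφ0] at this
    simp only [hφ] at this
    linarith

/-- Pointwise key inequality. -/
private lemma pointwise_key {a b c : ℝ} (ha : a ∈ Icc (-1:ℝ) 1) (hb : b ∈ Icc (-1:ℝ) 1)
    (ha0 : 0 ≤ a) (hb0 : 0 ≤ b) (hc0 : 0 < c) (hc2 : c ≤ 2) (hq : (a+b)/c ≤ 1) :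
    acsq ((a+b)/c) ≤ (acsq a + acsq b)/2 - (a+b)*(2-c)/c := by
  have hs0 : 0 ≤ a + b := by linarith
  have hs2 : a + b ≤ 2 := by linarith [ha.2, hb.2]
  have hmem2 : (a+b)/2 ∈ Icc (-1:ℝ) 1 := ⟨by linarith, by linarith⟩
  have hmemc : (a+b)/c ∈ Icc (-1:ℝ) 1 := by
    have h0 : 0 ≤ (a+b)/c := div_nonneg hs0 hc0.le
    exact ⟨by linarith, hq⟩
  have hle : (a+b)/2 ≤ (a+b)/c := by
    rw [div_le_div_iff₀ (by norm_num) hc0]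
    nlinarith
  have h1 := acsq_add_two_antitoneOn hmem2 hmemc hle
  simp only at h1
  have h2 : acsq ((a+b)/2) ≤ (acsq a + acsq b)/2 := by
    have := acsq_convexOn.2 ha hb (by norm_num : (0:ℝ) ≤ 1/2) (by norm_num : (0:ℝ) ≤ 1/2)
      (by norm_num)
    simp only [smul_eq_mul] at this
    calc acsq ((a+b)/2) = acsq (1/2 * a + 1/2 * b) := by ring_nf
      _ ≤ 1/2 * acsq a + 1/2 * acsq b := this
      _ = (acsq a + acsq b)/2 := by ring
  have halg : 2 * ((a+b)/2) - 2 * ((a+b)/c) = -((a+b)*(2-c)/c) := by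
    field_simp
    ring
  linarith


end Scalar

set_option maxHeartbeats 2000000 in
/-- under (A1) the Fréchet mean exists and is unique. -/
theorem frechet_mean_exists_unique [CompleteSpace H] [TopologicalSpace.SeparableSpace H]
    [MeasurableSpace H] [BorelSpace H]
    {Ω : Type*} [MeasurableSpace Ω] (P : Measure Ω) [IsProbabilityMeasure P]
    (X : Ω → H) (hX : Measurable X) (hXS : ∀ ω, ‖X ω‖ = 1)
    -- Assumption (A1)
    (U : Set H) (hUS : ∀ x ∈ U, ‖x‖ = 1) (hXU : ∀ᵐ ω ∂P, X ω ∈ U)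
    (hUd : ∀ x ∈ U, ∀ y ∈ U, rho x y ≤ Real.pi / 2) :
    ∃! μ : H, ‖μ‖ = 1 ∧ ∀ p : H, ‖p‖ = 1 →
      (∫ ω, rho (X ω) μ ^ 2 ∂P) ≤ ∫ ω, rho (X ω) p ^ 2 ∂P := by
  classical
  have hπ : (0:ℝ) < Real.pi := Real.pi_pos
  -- basic facts about inner products with unit vectors
  have hinner_mem : ∀ (p : H), ‖p‖ = 1 → ∀ ω : Ω, ⟪X ω, p⟫_ℝ ∈ Set.Icc (-1:ℝ) 1 := by
    intro p hp ω
    have h := abs_real_inner_le_norm (X ω) p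
    rw [hXS ω, hp, one_mul] at h
    rw [abs_le] at h
    exact ⟨h.1, h.2⟩
  have hmeas_inner : ∀ p : H, Measurable (fun ω => ⟪X ω, p⟫_ℝ) := by
    intro p
    exact (continuous_id.inner (continuous_const : Continuous fun _ : H => p)).measurable.comp hX
  have hint_inner : ∀ p : H, ‖p‖ = 1 → Integrable (fun ω => ⟪X ω, p⟫_ℝ) P := by
    intro p hp
    refine (integrable_const (1:ℝ)).mono' (hmeas_inner p).aestronglyMeasurable ?_
    refine Filter.Eventually.of_forall fun ω => ?_
    rw [Real.norm_eq_abs, abs_le]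
    exact ⟨(hinner_mem p hp ω).1, (hinner_mem p hp ω).2⟩
  have hrho_eq : ∀ (p : H) (ω : Ω), rho (X ω) p ^ 2 = acsq ⟪X ω, p⟫_ℝ := fun p ω => rfl
  have hmeasF : ∀ p : H, Measurable (fun ω => rho (X ω) p ^ 2) := by
    intro p
    have : Measurable (fun ω => Real.arccos ⟪X ω, p⟫_ℝ ^ 2) :=
      (Real.continuous_arccos.measurable.comp (hmeas_inner p)).pow_const 2
    exact this
  have hintF : ∀ p : H, Integrable (fun ω => rho (X ω) p ^ 2) P := by
    intro p
    refine (integrable_const (Real.pi ^ 2)).mono' (hmeasF p).aestronglyMeasurable ?_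
    refine Filter.Eventually.of_forall fun ω => ?_
    rw [hrho_eq, Real.norm_eq_abs, abs_of_nonneg (acsq_nonneg _)]
    exact acsq_le_sq_pi _
  have hF_nonneg : ∀ p : H, 0 ≤ ∫ ω, rho (X ω) p ^ 2 ∂P := fun p =>
    integral_nonneg fun ω => sq_nonneg _
  -- the closed convex cone K
  set K : Set H := {v | ∀ᵐ ω ∂P, 0 ≤ ⟪X ω, v⟫_ℝ} with hKdef
  have hKmem : ∀ v : H, v ∈ K ↔ ∀ᵐ ω ∂P, 0 ≤ ⟪X ω, v⟫_ℝ := fun v => Iff.rfl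
  have hK0 : (0:H) ∈ K := by
    rw [hKmem]
    refine Filter.Eventually.of_forall fun ω => ?_
    simp [inner_zero_right]
  have hKadd : ∀ u ∈ K, ∀ v ∈ K, u + v ∈ K := by
    intro u hu v hv
    rw [hKmem] at hu hv ⊢
    filter_upwards [hu, hv] with ω h1 h2
    rw [inner_add_right]
    linarith
  have hKsmul : ∀ (t : ℝ), 0 ≤ t → ∀ v ∈ K, t • v ∈ K := by
    intro t ht v hv
    rw [hKmem] at hv ⊢
    filter_upwards [hv] with ω h1
    rw [real_inner_smul_right]
    exact mul_nonneg ht h1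
  have hKconv : Convex ℝ K := by
    intro u hu v hv a b ha hb _
    exact hKadd _ (hKsmul a ha u hu) _ (hKsmul b hb v hv)
  have hKclosed : IsClosed K := by
    apply IsSeqClosed.isClosed
    intro x p hxK hxp
    rw [hKmem]
    have hall : ∀ᵐ ω ∂P, ∀ n, 0 ≤ ⟪X ω, x n⟫_ℝ := ae_all_iff.2 fun n => (hKmem _).1 (hxK n)
    filter_upwards [hall] with ω hω
    have ht : Filter.Tendsto (fun n => ⟪X ω, x n⟫_ℝ) atTop (𝓝 ⟪X ω, p⟫_ℝ) :=
      Filter.Tendsto.inner tendsto_const_nhds hxp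
    exact ge_of_tendsto' ht hω
  have hUK : ∀ x ∈ U, x ∈ K := by
    intro x hx
    rw [hKmem]
    filter_upwards [hXU] with ω hω
    exact Real.arccos_le_pi_div_two.1 (hUd (X ω) hω x hx)
  have hXmemK : ∀ᵐ ω ∂P, X ω ∈ K := by
    filter_upwards [hXU] with ω hω using hUK _ hω
  -- construction of the reference point c
  have hHne : Nonempty H := ⟨0⟩
  obtain ⟨n₀, hn₀⟩ : ∃ n, P (X ⁻¹' Metric.ball (TopologicalSpace.denseSeq H n) (1/4)) ≠ 0 := by
    by_contra hcon
    push_neg at hcon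
    have h0 : P (⋃ n, X ⁻¹' Metric.ball (TopologicalSpace.denseSeq H n) (1/4)) = 0 :=
      measure_iUnion_null_iff.2 hcon
    have hcover : (⋃ n, X ⁻¹' Metric.ball (TopologicalSpace.denseSeq H n) (1/4)) = Set.univ := by
      ext ω
      simp only [Set.mem_iUnion, Set.mem_preimage, Metric.mem_ball, Set.mem_univ, iff_true]
      obtain ⟨m, hm⟩ := (TopologicalSpace.denseRange_denseSeq H).exists_dist_lt (X ω)
        (by norm_num : (0:ℝ) < 1/4)
      exact ⟨m, hm⟩
    rw [hcover, measure_univ] at h0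
    exact one_ne_zero h0
  set E : Set Ω := X ⁻¹' Metric.ball (TopologicalSpace.denseSeq H n₀) (1/4) with hEdef
  have hEmeas : MeasurableSet E := hX Metric.isOpen_ball.measurableSet
  obtain ⟨ω₁, hω₁E, hω₁U⟩ : ∃ ω₁, ω₁ ∈ E ∧ X ω₁ ∈ U := by
    by_contra hcon
    push_neg at hcon
    have hsub : E ⊆ {ω | X ω ∉ U} := fun ω hω => hcon ω hω
    have hnull : P {ω | X ω ∉ U} = 0 := hXU
    exact hn₀ (measure_mono_null hsub hnull)
  set c : H := X ω₁ with hcdef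
  have hc_norm : ‖c‖ = 1 := hXS ω₁
  have hcK : c ∈ K := hUK c hω₁U
  have hEc : ∀ ω ∈ E, (1:ℝ)/2 ≤ ⟪X ω, c⟫_ℝ := by
    intro ω hω
    have hd1 : dist (X ω) (TopologicalSpace.denseSeq H n₀) < 1/4 := hω
    have hd2 : dist c (TopologicalSpace.denseSeq H n₀) < 1/4 := hω₁E
    have hd : dist (X ω) c < 1/2 := by
      calc dist (X ω) c ≤ dist (X ω) (TopologicalSpace.denseSeq H n₀) +
            dist (TopologicalSpace.denseSeq H n₀) c := dist_triangle _ _ _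
        _ < 1/2 := by rw [dist_comm (TopologicalSpace.denseSeq H n₀) c]; linarith
    have hns : ‖X ω - c‖ ^ 2 = 2 - 2 * ⟪X ω, c⟫_ℝ := by
      rw [norm_sub_sq_real, hXS, hc_norm]; ring
    rw [dist_eq_norm] at hd
    nlinarith [norm_nonneg (X ω - c), sq_nonneg (‖X ω - c‖)]
  set δE : ℝ := (P E).toReal with hδEdef
  have hδE : 0 < δE := ENNReal.toReal_pos hn₀ (measure_ne_top P E)
  set κ : ℝ := Real.pi ^ 2 / 4 - acsq (1/2) with hκdef
  have hκ : 0 < κ := by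
    have h1 : Real.arccos (1/2) < Real.pi / 2 := Real.arccos_lt_pi_div_two.2 (by norm_num)
    have h2 : 0 ≤ Real.arccos (1/2) := Real.arccos_nonneg _
    have : acsq (1/2) = Real.arccos (1/2) ^ 2 := rfl
    rw [hκdef, this]
    nlinarith
  have hFc : (∫ ω, rho (X ω) c ^ 2 ∂P) ≤ Real.pi ^ 2 / 4 - κ * δE := by
    have hptw : ∀ᵐ ω ∂P, rho (X ω) c ^ 2 ≤
        Real.pi ^ 2 / 4 - E.indicator (fun _ => κ) ω := by
      filter_upwards [(hKmem c).1 hcK] with ω hω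
      by_cases hωE : ω ∈ E
      · rw [Set.indicator_of_mem hωE, hrho_eq]
        have h2 : acsq ⟪X ω, c⟫_ℝ ≤ acsq (1/2) := acsq_antitone (hEc ω hωE)
        rw [hκdef]; linarith
      · rw [Set.indicator_of_notMem hωE, hrho_eq]
        have h2 : acsq ⟪X ω, c⟫_ℝ ≤ acsq 0 := acsq_antitone hω
        rw [acsq_zero] at h2
        linarith
    have hintR : Integrable (fun ω => Real.pi ^ 2 / 4 - E.indicator (fun _ => κ) ω) P :=
      (integrable_const _).sub ((integrable_const κ).indicator hEmeas)
    calc (∫ ω, rho (X ω) c ^ 2 ∂P)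
        ≤ ∫ ω, (Real.pi ^ 2 / 4 - E.indicator (fun _ => κ) ω) ∂P :=
          integral_mono_ae (hintF c) hintR hptw
      _ = Real.pi ^ 2 / 4 - κ * δE := by
          rw [integral_sub (integrable_const _) ((integrable_const κ).indicator hEmeas)]
          rw [integral_indicator_const κ hEmeas, integral_const, probReal_univ]
          simp [hδEdef, mul_comm, Measure.real]
  have hFc_lt : (∫ ω, rho (X ω) c ^ 2 ∂P) < Real.pi ^ 2 / 4 := by
    have h1 := mul_pos hκ hδE
    exact lt_of_le_of_lt hFc (sub_lt_self _ h1)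
  -- tangent bound
  have hTB : ∀ p : H, ‖p‖ = 1 →
      Real.pi ^ 2 / 4 - Real.pi * (∫ ω, ⟪X ω, p⟫_ℝ ∂P) ≤ ∫ ω, rho (X ω) p ^ 2 ∂P := by
    intro p hp
    have hptw : ∀ ω, Real.pi ^ 2 / 4 - Real.pi * ⟪X ω, p⟫_ℝ ≤ rho (X ω) p ^ 2 := by
      intro ω
      rw [hrho_eq]
      exact tangent_le_acsq (hinner_mem p hp ω)
    have hintL : Integrable (fun ω => Real.pi ^ 2 / 4 - Real.pi * ⟪X ω, p⟫_ℝ) P :=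
      (integrable_const _).sub ((hint_inner p hp).const_mul _)
    have e0 : (∫ ω, (Real.pi ^ 2 / 4 - Real.pi * ⟪X ω, p⟫_ℝ) ∂P)
        = (∫ _ω, (Real.pi ^ 2 / 4 : ℝ) ∂P) - ∫ ω, Real.pi * ⟪X ω, p⟫_ℝ ∂P :=
      integral_sub (integrable_const (Real.pi ^ 2 / 4 : ℝ))
        ((hint_inner p hp).const_mul Real.pi)
    have e1 : (∫ _ω, (Real.pi ^ 2 / 4 : ℝ) ∂P) = Real.pi ^ 2 / 4 := by
      rw [integral_const, probReal_univ]; simp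
    have e2 : (∫ ω, Real.pi * ⟪X ω, p⟫_ℝ ∂P) = Real.pi * ∫ ω, ⟪X ω, p⟫_ℝ ∂P :=
      integral_const_mul _ _
    have e3 : (∫ ω, (Real.pi ^ 2 / 4 - Real.pi * ⟪X ω, p⟫_ℝ) ∂P) ≤ ∫ ω, rho (X ω) p ^ 2 ∂P :=
      integral_mono_ae hintL (hintF p) (Filter.Eventually.of_forall hptw)
    rw [e0, e1, e2] at e3
    exact e3
  -- nonnegativity of B on K
  have hB_nonneg : ∀ p ∈ K, 0 ≤ ∫ ω, ⟪X ω, p⟫_ℝ ∂P := by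
    intro p hp
    exact integral_nonneg_of_ae ((hKmem p).1 hp)
  -- the quantitative midpoint inequality
  have hQL : ∀ p q : H, p ∈ K → q ∈ K → ‖p‖ = 1 → ‖q‖ = 1 → p + q ≠ 0 →
      (∫ ω, rho (X ω) (‖p + q‖⁻¹ • (p + q)) ^ 2 ∂P) ≤
        ((∫ ω, rho (X ω) p ^ 2 ∂P) + ∫ ω, rho (X ω) q ^ 2 ∂P) / 2 -
        ((2 - ‖p + q‖) / ‖p + q‖) *
          ((∫ ω, ⟪X ω, p⟫_ℝ ∂P) + ∫ ω, ⟪X ω, q⟫_ℝ ∂P) := by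
    intro p q hpK hqK hp hq hw
    have hwpos : 0 < ‖p + q‖ := norm_pos_iff.2 hw
    have hw2 : ‖p + q‖ ≤ 2 := by
      calc ‖p + q‖ ≤ ‖p‖ + ‖q‖ := norm_add_le _ _
        _ = 2 := by rw [hp, hq]; norm_num
    have hwnorm : ‖‖p + q‖⁻¹ • (p + q)‖ = 1 := by
      rw [norm_smul, norm_inv, norm_norm]
      field_simp
    have hptw : ∀ᵐ ω ∂P, rho (X ω) (‖p + q‖⁻¹ • (p + q)) ^ 2 ≤
        (rho (X ω) p ^ 2 + rho (X ω) q ^ 2) / 2 -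
          ((2 - ‖p + q‖) / ‖p + q‖) * (⟪X ω, p⟫_ℝ + ⟪X ω, q⟫_ℝ) := by
      filter_upwards [(hKmem p).1 hpK, (hKmem q).1 hqK] with ω h1 h2
      have hinw : ⟪X ω, ‖p + q‖⁻¹ • (p + q)⟫_ℝ = (⟪X ω, p⟫_ℝ + ⟪X ω, q⟫_ℝ) / ‖p + q‖ := by
        rw [real_inner_smul_right, inner_add_right]
        field_simp
      have hq1 : (⟪X ω, p⟫_ℝ + ⟪X ω, q⟫_ℝ) / ‖p + q‖ ≤ 1 := by
        rw [← hinw]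
        exact (hinner_mem _ hwnorm ω).2
      have hkey := pointwise_key (hinner_mem p hp ω) (hinner_mem q hq ω) h1 h2 hwpos hw2 hq1
      rw [hrho_eq, hrho_eq, hrho_eq, hinw]
      calc acsq ((⟪X ω, p⟫_ℝ + ⟪X ω, q⟫_ℝ) / ‖p + q‖)
          ≤ (acsq ⟪X ω, p⟫_ℝ + acsq ⟪X ω, q⟫_ℝ) / 2 -
            (⟪X ω, p⟫_ℝ + ⟪X ω, q⟫_ℝ) * (2 - ‖p + q‖) / ‖p + q‖ := hkey
        _ = (acsq ⟪X ω, p⟫_ℝ + acsq ⟪X ω, q⟫_ℝ) / 2 -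
            ((2 - ‖p + q‖) / ‖p + q‖) * (⟪X ω, p⟫_ℝ + ⟪X ω, q⟫_ℝ) := by ring
    have hintR : Integrable (fun ω => (rho (X ω) p ^ 2 + rho (X ω) q ^ 2) / 2 -
        ((2 - ‖p + q‖) / ‖p + q‖) * (⟪X ω, p⟫_ℝ + ⟪X ω, q⟫_ℝ)) P :=
      (((hintF p).add (hintF q)).div_const 2).sub
        (((hint_inner p hp).add (hint_inner q hq)).const_mul _)
    have e0 : (∫ ω, ((rho (X ω) p ^ 2 + rho (X ω) q ^ 2) / 2 -
          ((2 - ‖p + q‖) / ‖p + q‖) * (⟪X ω, p⟫_ℝ + ⟪X ω, q⟫_ℝ)) ∂P)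
        = (∫ ω, (rho (X ω) p ^ 2 + rho (X ω) q ^ 2) / 2 ∂P) -
          ∫ ω, ((2 - ‖p + q‖) / ‖p + q‖) * (⟪X ω, p⟫_ℝ + ⟪X ω, q⟫_ℝ) ∂P :=
      integral_sub (((hintF p).add (hintF q)).div_const 2)
        (((hint_inner p hp).add (hint_inner q hq)).const_mul ((2 - ‖p + q‖) / ‖p + q‖))
    have e1 : (∫ ω, (rho (X ω) p ^ 2 + rho (X ω) q ^ 2) / 2 ∂P)
        = ((∫ ω, rho (X ω) p ^ 2 ∂P) + ∫ ω, rho (X ω) q ^ 2 ∂P) / 2 := by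
      rw [integral_div, integral_add (hintF p) (hintF q)]
    have e2 : (∫ ω, ((2 - ‖p + q‖) / ‖p + q‖) * (⟪X ω, p⟫_ℝ + ⟪X ω, q⟫_ℝ) ∂P)
        = ((2 - ‖p + q‖) / ‖p + q‖) * ((∫ ω, ⟪X ω, p⟫_ℝ ∂P) + ∫ ω, ⟪X ω, q⟫_ℝ ∂P) := by
      rw [integral_const_mul, integral_add (hint_inner p hp) (hint_inner q hq)]
    have e3 : (∫ ω, rho (X ω) (‖p + q‖⁻¹ • (p + q)) ^ 2 ∂P)
        ≤ ∫ ω, ((rho (X ω) p ^ 2 + rho (X ω) q ^ 2) / 2 -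
            ((2 - ‖p + q‖) / ‖p + q‖) * (⟪X ω, p⟫_ℝ + ⟪X ω, q⟫_ℝ)) ∂P :=
      integral_mono_ae (hintF _) hintR hptw
    rw [e0, e1, e2] at e3
    exact e3
  -- if p is antipodally degenerate it has maximal value
  have hFmax : ∀ p : H, ‖p‖ = 1 → (∀ᵐ ω ∂P, ⟪X ω, p⟫_ℝ ≤ 0) →
      Real.pi ^ 2 / 4 ≤ ∫ ω, rho (X ω) p ^ 2 ∂P := by
    intro p hp hae
    have hptw : ∀ᵐ ω ∂P, Real.pi ^ 2 / 4 ≤ rho (X ω) p ^ 2 := by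
      filter_upwards [hae] with ω hω
      rw [hrho_eq]
      have := acsq_antitone hω
      rw [acsq_zero] at this
      linarith
    calc Real.pi ^ 2 / 4 = ∫ _ω, (Real.pi ^ 2 / 4 : ℝ) ∂P := by
          rw [integral_const, probReal_univ]; simp
      _ ≤ ∫ ω, rho (X ω) p ^ 2 ∂P := integral_mono_ae (integrable_const _) (hintF p) hptw
  -- projection lemma: any unit vector can be improved into K
  have hPL : ∀ p : H, ‖p‖ = 1 → ∃ p', p' ∈ K ∧ ‖p'‖ = 1 ∧
      (∫ ω, rho (X ω) p' ^ 2 ∂P) ≤ (∫ ω, rho (X ω) p ^ 2 ∂P) ∧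
      ((∫ ω, rho (X ω) p' ^ 2 ∂P) = (∫ ω, rho (X ω) p ^ 2 ∂P) → p ∈ K) := by
    intro p hp
    obtain ⟨v, hvK, hvmin⟩ := exists_norm_eq_iInf_of_complete_convex ⟨0, hK0⟩
      hKclosed.isComplete hKconv p
    have hvar := (norm_eq_iInf_iff_real_inner_le_zero hKconv hvK).1 hvmin
    by_cases hv0 : v = 0
    · -- p is in the polar cone, c is strictly better
      have hple : ∀ w ∈ K, ⟪p, w⟫_ℝ ≤ 0 := by
        intro w hw
        have := hvar w hw
        simpa [hv0] using this
      have hae : ∀ᵐ ω ∂P, ⟪X ω, p⟫_ℝ ≤ 0 := by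
        filter_upwards [hXmemK] with ω hω
        rw [real_inner_comm]
        exact hple _ hω
      have hlow := hFmax p hp hae
      refine ⟨c, hcK, hc_norm, le_of_lt (lt_of_lt_of_le hFc_lt hlow), fun h => ?_⟩
      exfalso
      rw [h] at hFc_lt
      linarith
    · have hvpos : 0 < ‖v‖ := norm_pos_iff.2 hv0
      have hrv : ⟪p - v, v⟫_ℝ = 0 := by
        have le1 : ⟪p - v, v⟫_ℝ ≤ 0 := by
          have h2 := hvar ((2:ℝ) • v) (hKsmul 2 (by norm_num) v hvK)
          have he : (2:ℝ) • v - v = v := by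
            rw [two_smul]; abel
          rwa [he] at h2
        have le2 : 0 ≤ ⟪p - v, v⟫_ℝ := by
          have h2 := hvar 0 hK0
          rw [zero_sub, inner_neg_right] at h2
          linarith
        linarith
      have hrle : ∀ w ∈ K, ⟪p - v, w⟫_ℝ ≤ 0 := by
        intro w hw
        have h1 := hvar w hw
        rw [inner_sub_right, hrv] at h1
        linarith
      have hv1 : ‖v‖ ≤ 1 := by
        have h1 : ⟪v, v⟫_ℝ = ⟪p, v⟫_ℝ - ⟪p - v, v⟫_ℝ := by
          rw [inner_sub_left]; ring
        rw [hrv, sub_zero, real_inner_self_eq_norm_sq] at h1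
        have h2 : ⟪p, v⟫_ℝ ≤ ‖p‖ * ‖v‖ := real_inner_le_norm p v
        rw [hp, one_mul] at h2
        nlinarith
      set p' : H := ‖v‖⁻¹ • v with hp'def
      have hp'K : p' ∈ K := hKsmul _ (inv_nonneg.2 hvpos.le) v hvK
      have hp'n : ‖p'‖ = 1 := by
        rw [hp'def, norm_smul, norm_inv, norm_norm]
        field_simp
      have hmono_ae : ∀ᵐ ω ∂P, ⟪X ω, p⟫_ℝ ≤ ⟪X ω, p'⟫_ℝ := by
        filter_upwards [hXmemK, (hKmem p').1 hp'K] with ω h1 h2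
        have ha : ⟪X ω, p⟫_ℝ = ⟪X ω, v⟫_ℝ + ⟪X ω, p - v⟫_ℝ := by
          rw [inner_sub_right]; ring
        have hb : ⟪X ω, p - v⟫_ℝ ≤ 0 := by
          rw [real_inner_comm]
          exact hrle _ h1
        have hc' : ⟪X ω, p'⟫_ℝ = ‖v‖⁻¹ * ⟪X ω, v⟫_ℝ := by
          rw [hp'def, real_inner_smul_right]
        have hd' : ⟪X ω, v⟫_ℝ = ‖v‖ * ⟪X ω, p'⟫_ℝ := by
          rw [hc']
          field_simp
        nlinarith
      have hFle : (∫ ω, rho (X ω) p' ^ 2 ∂P) ≤ ∫ ω, rho (X ω) p ^ 2 ∂P := by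
        refine integral_mono_ae (hintF p') (hintF p) ?_
        filter_upwards [hmono_ae] with ω hω
        rw [hrho_eq, hrho_eq]
        exact acsq_antitone hω
      refine ⟨p', hp'K, hp'n, hFle, fun heq => ?_⟩
      have hdiff0 : (fun ω => rho (X ω) p ^ 2 - rho (X ω) p' ^ 2) =ᵐ[P] 0 := by
        rw [← integral_eq_zero_iff_of_nonneg_ae]
        · rw [integral_sub (hintF p) (hintF p'), heq, sub_self]
        · filter_upwards [hmono_ae] with ω hω
          rw [Pi.zero_apply, sub_nonneg, hrho_eq, hrho_eq]
          exact acsq_antitone hω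
        · exact (hintF p).sub (hintF p')
      rw [hKmem]
      filter_upwards [hdiff0, hmono_ae, (hKmem p').1 hp'K] with ω h0 h1 h2
      have heqq : acsq ⟪X ω, p⟫_ℝ = acsq ⟪X ω, p'⟫_ℝ := by
        have := h0
        rw [Pi.zero_apply, sub_eq_zero, hrho_eq, hrho_eq] at this
        exact this
      have := acsq_inj (hinner_mem p hp ω) (hinner_mem p' hp'n ω) heqq
      rw [this]
      exact h2
  clear_value E c δE κ
  -- constants
  set γ : ℝ := κ * δE with hγdef
  have hγ : 0 < γ := mul_pos hκ hδE
  have hFcγ : (∫ ω, rho (X ω) c ^ 2 ∂P) ≤ Real.pi ^ 2 / 4 - γ := hFc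
  clear_value γ
  clear hFc hγdef hκ hδE hκdef hδEdef hEc hEmeas hn₀ hEdef hcdef
  set δ0 : ℝ := γ / (2 * Real.pi) with hδ0def
  have hδ0 : 0 < δ0 := by
    rw [hδ0def]; positivity
  have hδ0' : 2 * Real.pi * δ0 = γ := by
    rw [hδ0def]; field_simp
  clear_value δ0
  clear hδ0def
  -- the infimum
  set T : Set ℝ := (fun p => ∫ ω, rho (X ω) p ^ 2 ∂P) '' {p : H | p ∈ K ∧ ‖p‖ = 1} with hTdef
  have hTne : T.Nonempty := ⟨_, ⟨c, ⟨hcK, hc_norm⟩, rfl⟩⟩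
  have hTbdd : BddBelow T := by
    refine ⟨0, ?_⟩
    rintro r ⟨p, _, rfl⟩
    exact hF_nonneg p
  set mstar : ℝ := sInf T with hmdef
  have hmle : ∀ p ∈ K, ‖p‖ = 1 → mstar ≤ ∫ ω, rho (X ω) p ^ 2 ∂P := by
    intro p hpK hpn
    exact csInf_le hTbdd ⟨p, ⟨hpK, hpn⟩, rfl⟩
  have hmc : mstar ≤ Real.pi ^ 2 / 4 - γ := le_trans (hmle c hcK hc_norm) hFcγ
  -- lower bound on B along near-minimizers
  have hBlow : ∀ p : H, p ∈ K → ‖p‖ = 1 →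
      (∫ ω, rho (X ω) p ^ 2 ∂P) ≤ mstar + γ / 2 → δ0 ≤ ∫ ω, ⟪X ω, p⟫_ℝ ∂P := by
    intro p hpK hpn hFp
    have h1 := hTB p hpn
    have h2 : γ / 2 ≤ Real.pi * ∫ ω, ⟪X ω, p⟫_ℝ ∂P := by linarith
    nlinarith [hB_nonneg p hpK]
  -- degenerate antipodal configuration forces a large value
  have hdeg : ∀ p q' : H, q' ∈ K → ‖p‖ = 1 → p + q' = 0 →
      Real.pi ^ 2 / 4 ≤ ∫ ω, rho (X ω) p ^ 2 ∂P := by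
    intro p q' hq'K hpn hpq
    apply hFmax p hpn
    filter_upwards [(hKmem q').1 hq'K] with ω h
    have hqp : q' = -p := eq_neg_of_add_eq_zero_right hpq
    rw [hqp, inner_neg_right] at h
    linarith
  -- a minimizing sequence in K
  have hmin_seq : ∀ n : ℕ, ∃ p : H, p ∈ K ∧ ‖p‖ = 1 ∧
      (∫ ω, rho (X ω) p ^ 2 ∂P) < mstar + min (γ / 2) (1 / (n + 1)) := by
    intro n
    have hε : 0 < min (γ / 2) (1 / (n + 1) : ℝ) := lt_min (by linarith) (by positivity)
    obtain ⟨r, hrT, hrlt⟩ := Real.lt_sInf_add_pos hTne hε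
    obtain ⟨p, ⟨hpK, hpn⟩, rfl⟩ := hrT
    exact ⟨p, hpK, hpn, by rwa [← hmdef] at hrlt⟩
  clear_value mstar
  clear hmdef hTne hTbdd hTdef
  choose q hqK hqn hqF using hmin_seq
  have hqlow : ∀ n, mstar ≤ ∫ ω, rho (X ω) (q n) ^ 2 ∂P := fun n => hmle _ (hqK n) (hqn n)
  have hqB : ∀ n, δ0 ≤ ∫ ω, ⟪X ω, q n⟫_ℝ ∂P := by
    intro n
    refine hBlow _ (hqK n) (hqn n) ?_
    have := min_le_left (γ / 2) (1 / (n + 1) : ℝ)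
    linarith [hqF n]
  -- the sequence is Cauchy
  have hdist : ∀ n m N : ℕ, N ≤ n → N ≤ m →
      dist (q n) (q m) ≤ Real.sqrt (4 / (δ0 * (N + 1))) := by
    intro n m N hn hm
    have hεn : min (γ / 2) (1 / (n + 1) : ℝ) ≤ 1 / (N + 1) := by
      refine le_trans (min_le_right _ _) ?_
      apply one_div_le_one_div_of_le (by positivity)
      exact_mod_cast by exact_mod_cast add_le_add_left (Nat.cast_le.2 hn) 1
    have hεm : min (γ / 2) (1 / (m + 1) : ℝ) ≤ 1 / (N + 1) := by
      refine le_trans (min_le_right _ _) ?_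
      apply one_div_le_one_div_of_le (by positivity)
      exact_mod_cast by exact_mod_cast add_le_add_left (Nat.cast_le.2 hm) 1
    have hw0 : q n + q m ≠ 0 := by
      intro h0
      have hge := hdeg (q n) (q m) (hqK m) (hqn n) h0
      have hlt := hqF n
      have h3 := min_le_left (γ / 2) (1 / (n + 1) : ℝ)
      linarith
    have hwpos : 0 < ‖q n + q m‖ := norm_pos_iff.2 hw0
    have hw2 : ‖q n + q m‖ ≤ 2 := by
      calc ‖q n + q m‖ ≤ ‖q n‖ + ‖q m‖ := norm_add_le _ _
        _ = 2 := by rw [hqn, hqn]; norm_num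
    have hQ := hQL (q n) (q m) (hqK n) (hqK m) (hqn n) (hqn m) hw0
    have hw'K : ‖q n + q m‖⁻¹ • (q n + q m) ∈ K :=
      hKsmul _ (inv_nonneg.2 hwpos.le) _ (hKadd _ (hqK n) _ (hqK m))
    have hw'n : ‖‖q n + q m‖⁻¹ • (q n + q m)‖ = 1 := by
      rw [norm_smul, norm_inv, norm_norm]; field_simp
    have hmw := hmle _ hw'K hw'n
    -- combine
    have hrB : ((2 - ‖q n + q m‖) / ‖q n + q m‖) *
        ((∫ ω, ⟪X ω, q n⟫_ℝ ∂P) + ∫ ω, ⟪X ω, q m⟫_ℝ ∂P) ≤ 1 / (N + 1) := by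
      linarith [hqF n, hqF m, hqlow n, hqlow m]
    have ht0 : (0:ℝ) ≤ 2 - ‖q n + q m‖ := by linarith
    have hr0 : (0:ℝ) ≤ (2 - ‖q n + q m‖) / ‖q n + q m‖ := div_nonneg ht0 hwpos.le
    have hrB2 : ((2 - ‖q n + q m‖) / ‖q n + q m‖) * (2 * δ0) ≤ 1 / (N + 1) := by
      refine le_trans (mul_le_mul_of_nonneg_left ?_ hr0) hrB
      linarith [hqB n, hqB m]
    have hdd : (2 - ‖q n + q m‖) * (2 * δ0) / 2 ≤ (2 - ‖q n + q m‖) * (2 * δ0) / ‖q n + q m‖ :=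
      div_le_div_of_nonneg_left (by nlinarith) hwpos hw2
    have htb : (2 - ‖q n + q m‖) * δ0 ≤ 1 / (N + 1) := by
      have he1 : (2 - ‖q n + q m‖) * (2 * δ0) / ‖q n + q m‖ =
          ((2 - ‖q n + q m‖) / ‖q n + q m‖) * (2 * δ0) := by ring
      have he2 : (2 - ‖q n + q m‖) * (2 * δ0) / 2 = (2 - ‖q n + q m‖) * δ0 := by ring
      rw [he1, he2] at hdd
      linarith
    have hN1 : (0:ℝ) < (N:ℝ) + 1 := by positivity
    have htb2 : 2 - ‖q n + q m‖ ≤ 1 / (δ0 * (N + 1)) := by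
      rw [le_div_iff₀ (by positivity)]
      rw [le_div_iff₀ hN1] at htb
      nlinarith
    have hsq : ‖q n - q m‖ ^ 2 + ‖q n + q m‖ ^ 2 = 4 := by
      rw [norm_sub_sq_real, norm_add_sq_real, hqn, hqn]
      ring
    have hsqle : ‖q n - q m‖ ^ 2 ≤ 4 / (δ0 * (N + 1)) := by
      have h4 : ‖q n - q m‖ ^ 2 ≤ 4 * (2 - ‖q n + q m‖) := by nlinarith [norm_nonneg (q n + q m)]
      have : 4 * (2 - ‖q n + q m‖) ≤ 4 * (1 / (δ0 * (N + 1))) := by linarith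
      calc ‖q n - q m‖ ^ 2 ≤ 4 * (1 / (δ0 * (N + 1))) := by linarith
        _ = 4 / (δ0 * (N + 1)) := by ring
    rw [dist_eq_norm]
    calc ‖q n - q m‖ = Real.sqrt (‖q n - q m‖ ^ 2) := (Real.sqrt_sq (norm_nonneg _)).symm
      _ ≤ Real.sqrt (4 / (δ0 * (N + 1))) := Real.sqrt_le_sqrt hsqle
  have hbtend : Filter.Tendsto (fun N : ℕ => Real.sqrt (4 / (δ0 * (N + 1)))) atTop (𝓝 0) := by
    have h1 : Filter.Tendsto (fun N : ℕ => 4 / (δ0 * (N + 1))) atTop (𝓝 0) := by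
      have h2 := tendsto_one_div_add_atTop_nhds_zero_nat.const_mul (4 / δ0)
      rw [mul_zero] at h2
      refine h2.congr fun n => ?_
      field_simp
    have h3 := (Real.continuous_sqrt.tendsto 0).comp h1
    rw [Real.sqrt_zero] at h3
    exact h3
  have hcauchy : CauchySeq q := cauchySeq_of_le_tendsto_0 _ hdist hbtend
  obtain ⟨μ, hμt⟩ := cauchySeq_tendsto_of_complete hcauchy
  have hμn : ‖μ‖ = 1 := by
    have h1 : Filter.Tendsto (fun n => ‖q n‖) atTop (𝓝 ‖μ‖) := hμt.norm
    have h2 : Filter.Tendsto (fun _ : ℕ => (1:ℝ)) atTop (𝓝 ‖μ‖) := by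
      refine h1.congr fun n => ?_
      rw [hqn]
    exact tendsto_nhds_unique h2 tendsto_const_nhds
  have hμK : μ ∈ K := by
    rw [hKmem]
    filter_upwards [ae_all_iff.2 fun n => (hKmem _).1 (hqK n)] with ω hω
    exact ge_of_tendsto' (Filter.Tendsto.inner tendsto_const_nhds hμt) hω
  have hFtend : Filter.Tendsto (fun n => ∫ ω, rho (X ω) (q n) ^ 2 ∂P) atTop
      (𝓝 (∫ ω, rho (X ω) μ ^ 2 ∂P)) := by
    refine tendsto_integral_of_dominated_convergence (fun _ => Real.pi ^ 2)
      (fun n => (hmeasF (q n)).aestronglyMeasurable) (integrable_const _) ?_ ?_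
    · intro n
      refine Filter.Eventually.of_forall fun ω => ?_
      rw [hrho_eq, Real.norm_eq_abs, abs_of_nonneg (acsq_nonneg _)]
      exact acsq_le_sq_pi _
    · refine Filter.Eventually.of_forall fun ω => ?_
      have h1 : Filter.Tendsto (fun n => ⟪X ω, q n⟫_ℝ) atTop (𝓝 ⟪X ω, μ⟫_ℝ) :=
        Filter.Tendsto.inner tendsto_const_nhds hμt
      have h2 : Filter.Tendsto (fun n => Real.arccos ⟪X ω, q n⟫_ℝ) atTop
          (𝓝 (Real.arccos ⟪X ω, μ⟫_ℝ)) := (Real.continuous_arccos.tendsto _).comp h1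
      exact h2.pow 2
  have hFtend' : Filter.Tendsto (fun n => ∫ ω, rho (X ω) (q n) ^ 2 ∂P) atTop (𝓝 mstar) := by
    have hup : Filter.Tendsto (fun n : ℕ => mstar + 1 / (n + 1) : ℕ → ℝ) atTop (𝓝 mstar) := by
      have h2 := tendsto_one_div_add_atTop_nhds_zero_nat.const_add mstar
      rw [add_zero] at h2
      exact h2
    refine tendsto_of_tendsto_of_tendsto_of_le_of_le tendsto_const_nhds hup hqlow ?_
    intro n
    have h3 := min_le_right (γ / 2) (1 / (n + 1) : ℝ)
    linarith [hqF n]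
  have hFμ : (∫ ω, rho (X ω) μ ^ 2 ∂P) = mstar := tendsto_nhds_unique hFtend hFtend'
  have hμmin : ∀ p : H, ‖p‖ = 1 →
      (∫ ω, rho (X ω) μ ^ 2 ∂P) ≤ ∫ ω, rho (X ω) p ^ 2 ∂P := by
    intro p hpn
    obtain ⟨p', hK', hn', hle', _⟩ := hPL p hpn
    rw [hFμ]
    exact (hmle p' hK' hn').trans hle'
  refine ⟨μ, ⟨hμn, hμmin⟩, ?_⟩
  rintro ν ⟨hνn, hνmin⟩
  by_contra hne
  have hFν_le : (∫ ω, rho (X ω) ν ^ 2 ∂P) ≤ mstar := by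
    rw [← hFμ]
    exact hνmin μ hμn
  have hFν : (∫ ω, rho (X ω) ν ^ 2 ∂P) = mstar := by
    refine le_antisymm hFν_le ?_
    rw [← hFμ]
    exact hμmin ν hνn
  have hνK : ν ∈ K := by
    obtain ⟨ν', hK', hn', hle', heq'⟩ := hPL ν hνn
    apply heq'
    refine le_antisymm hle' ?_
    rw [hFν]
    exact hmle ν' hK' hn'
  have hw0 : ν + μ ≠ 0 := by
    intro h0
    have hge := hdeg ν μ hμK hνn h0
    linarith
  have hwpos : 0 < ‖ν + μ‖ := norm_pos_iff.2 hw0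
  have hwlt : ‖ν + μ‖ < 2 := by
    have hsub : ν - μ ≠ 0 := sub_ne_zero.2 hne
    have hsubpos : 0 < ‖ν - μ‖ := norm_pos_iff.2 hsub
    have hsq : ‖ν - μ‖ ^ 2 + ‖ν + μ‖ ^ 2 = 4 := by
      rw [norm_sub_sq_real, norm_add_sq_real, hνn, hμn]
      ring
    nlinarith [norm_nonneg (ν + μ)]
  have hQ := hQL ν μ hνK hμK hνn hμn hw0
  have hw'K : ‖ν + μ‖⁻¹ • (ν + μ) ∈ K :=
    hKsmul _ (inv_nonneg.2 hwpos.le) _ (hKadd _ hνK _ hμK)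
  have hw'n : ‖‖ν + μ‖⁻¹ • (ν + μ)‖ = 1 := by
    rw [norm_smul, norm_inv, norm_norm]; field_simp
  have hmw := hmle _ hw'K hw'n
  have hBν : δ0 ≤ ∫ ω, ⟪X ω, ν⟫_ℝ ∂P := by
    refine hBlow ν hνK hνn ?_
    rw [hFν]
    linarith
  have hBμ : δ0 ≤ ∫ ω, ⟪X ω, μ⟫_ℝ ∂P := by
    refine hBlow μ hμK hμn ?_
    rw [hFμ]
    linarith
  have hr : 0 < (2 - ‖ν + μ‖) / ‖ν + μ‖ := div_pos (by linarith) hwpos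
  have hmul1 : ((2 - ‖ν + μ‖) / ‖ν + μ‖) * (2 * δ0) ≤
      ((2 - ‖ν + μ‖) / ‖ν + μ‖) * ((∫ ω, ⟪X ω, ν⟫_ℝ ∂P) + ∫ ω, ⟪X ω, μ⟫_ℝ ∂P) :=
    mul_le_mul_of_nonneg_left (by linarith) hr.le
  have hmul2 : 0 < ((2 - ‖ν + μ‖) / ‖ν + μ‖) * (2 * δ0) := mul_pos hr (by linarith)
  rw [hFν, hFμ] at hQ
  linarith
end
end

section
/- Let X be an S-valued random element whose Fréchet mean μ exists (i.e., μ is a minimizer of M(p) = E[ρ(X,p)²] over S) and suppose P(ρ(μ, X) = π) = 0. Then the tangent vector V = log_μ X satisfies E[V] = 0, where the expectation is the Bochner integral in H. -/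
open MeasureTheory ProbabilityTheory Filter
open scoped InnerProductSpace Topology BigOperators

noncomputable section

variable {H : Type*} [NormedAddCommGroup H] [InnerProductSpace ℝ H]

section ScalarLemmas

open Real

private lemma sinc_mono' {a b : ℝ} (ha : 0 ≤ a) (hab : a ≤ b) (hb : b ≤ π) :
    Real.sin b * a ≤ Real.sin a * b := by
  rcases eq_or_lt_of_le (ha.trans hab) with h | hb0
  · have ha0 : a = 0 := le_antisymm (hab.trans_eq h.symm) ha
    simp [← h, ha0]
  · have hc := strictConcaveOn_sin_Icc.concaveOn
    have h1 : (1 - a/b) • Real.sin 0 + (a/b) • Real.sin b ≤ Real.sin ((1 - a/b) • 0 + (a/b) • b) :=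
      hc.2 (Set.left_mem_Icc.2 (by positivity)) (Set.mem_Icc.2 ⟨hb0.le, hb⟩)
        (by rw [sub_nonneg]; exact div_le_one_of_le₀ hab hb0.le)
        (by positivity) (by ring)
    simp only [smul_eq_mul, smul_zero, Real.sin_zero, mul_zero, zero_add,
      div_mul_cancel₀ a hb0.ne'] at h1
    calc Real.sin b * a = (a / b * Real.sin b) * b := by field_simp
    _ ≤ Real.sin a * b := by nlinarith

private lemma G_nonneg' {r t w : ℝ} (hr0 : 0 < r) (hrπ : r ≤ π) (ht0 : 0 < t) (htπ : t ≤ π)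
    (hw1 : |r - t| ≤ w) (hw2 : w ≤ r + t) (hw3 : w ≤ π) :
    Real.cos w ≤ Real.cos r * Real.cos t +
      Real.sin r * Real.sin t * ((r^2 + t^2 - w^2) / (2*r*t)) := by
  set k : ℝ := Real.sin r * Real.sin t / (r*t) with hk
  set G : ℝ → ℝ := fun y => Real.cos r * Real.cos t +
      Real.sin r * Real.sin t * ((r^2 + t^2 - y^2) / (2*r*t)) - Real.cos y with hGdef
  have hG : ∀ x : ℝ, HasDerivAt G (Real.sin x - k * x) x := by
    intro x
    have h1 : HasDerivAt (fun y : ℝ => y^2) (2*x) x := by simpa using hasDerivAt_pow 2 x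
    have h2 : HasDerivAt (fun y : ℝ => r^2 + t^2 - y^2) (-(2*x)) x := h1.const_sub _
    have h3 := ((h2.div_const (2*r*t)).const_mul (Real.sin r * Real.sin t)).const_add
      (Real.cos r * Real.cos t)
    have h4 := h3.sub (Real.hasDerivAt_cos x)
    refine HasDerivAt.congr_deriv (f := G) h4 ?_
    rw [hk]
    field_simp
    ring
  have hGdiff : Differentiable ℝ G := fun x => (hG x).differentiableAt
  have hDstep : ∀ a b : ℝ, 0 ≤ a → a ≤ b → b ≤ π → 0 ≤ Real.sin b - k * b →
      0 ≤ Real.sin a - k * a := by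
    intro a b ha hab hb hDb
    rcases eq_or_lt_of_le (ha.trans hab) with h | hb0
    · have ha0 : a = 0 := le_antisymm (hab.trans_eq h.symm) ha
      simp [ha0]
    · have h1 : Real.sin b * a ≤ Real.sin a * b := sinc_mono' ha hab hb
      have h2 : k * b ≤ Real.sin b := by linarith
      have h3 : (k * a) * b ≤ Real.sin a * b := by nlinarith
      nlinarith
  have hGa : G |r - t| = 0 := by
    rw [hGdef]
    simp only
    rw [sq_abs, Real.cos_abs]
    have : (r^2 + t^2 - (r-t)^2) / (2*r*t) = 1 := by
      rw [div_eq_one_iff_eq (by positivity)]; ring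
    rw [this, Real.cos_sub]; ring
  have hGb : 0 ≤ G (min (r+t) π) := by
    rcases le_total (r+t) π with h | h
    · rw [min_eq_left h, hGdef]
      simp only
      have : (r^2 + t^2 - (r+t)^2) / (2*r*t) = -1 := by
        rw [div_eq_iff (by positivity : (2*r*t) ≠ 0)]; ring
      rw [this, Real.cos_add]; ring_nf; nlinarith [Real.cos_add r t]
    · rw [min_eq_right h, hGdef]
      simp only [Real.cos_pi]
      have h1 : -1 ≤ (r^2 + t^2 - π^2) / (2*r*t) := by
        rw [le_div_iff₀ (by positivity)]
        nlinarith
      have h2 : 0 ≤ Real.sin r * Real.sin t :=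
        mul_nonneg (Real.sin_nonneg_of_nonneg_of_le_pi hr0.le hrπ)
          (Real.sin_nonneg_of_nonneg_of_le_pi ht0.le htπ)
      have h3 : Real.sin r * Real.sin t * (-1) ≤
          Real.sin r * Real.sin t * ((r^2 + t^2 - π^2) / (2*r*t)) :=
        mul_le_mul_of_nonneg_left h1 h2
      have h4 : Real.cos (r+t) + 1 ≥ 0 := by nlinarith [Real.neg_one_le_cos (r+t)]
      rw [Real.cos_add] at h4
      linarith
  have hwlo : |r - t| ≤ w := hw1
  have hwhi : w ≤ min (r+t) π := le_min hw2 hw3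
  have habs : (0:ℝ) ≤ |r - t| := abs_nonneg _
  have key : 0 ≤ G w := by
    by_cases hcase : ∀ x ∈ Set.Icc |r-t| w, 0 ≤ Real.sin x - k * x
    · have hmono : MonotoneOn G (Set.Icc |r-t| w) := by
        apply monotoneOn_of_deriv_nonneg (convex_Icc _ _) hGdiff.continuous.continuousOn
          (hGdiff.differentiableOn)
        intro x hx
        rw [(hG x).deriv]
        exact hcase x (interior_subset hx)
      have := hmono (Set.left_mem_Icc.2 hwlo) (Set.right_mem_Icc.2 hwlo) hwlo
      rw [hGa] at this; exact this
    · push_neg at hcase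
      obtain ⟨x₀, hx₀, hx₀neg⟩ := hcase
      have hanti : AntitoneOn G (Set.Icc w (min (r+t) π)) := by
        apply antitoneOn_of_deriv_nonpos (convex_Icc _ _) hGdiff.continuous.continuousOn
          (hGdiff.differentiableOn)
        intro x hx
        rw [(hG x).deriv]
        have hx' := interior_subset hx
        by_contra hpos
        push_neg at hpos
        have hx0π : x ≤ π := hx'.2.trans (min_le_right _ _)
        have : 0 ≤ Real.sin x₀ - k * x₀ :=
          hDstep x₀ x (habs.trans hx₀.1) (hx₀.2.trans hx'.1) hx0π hpos.le
        linarith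
      have := hanti (Set.left_mem_Icc.2 hwhi) (Set.right_mem_Icc.2 hwhi) hwhi
      exact hGb.trans this
  rw [hGdef] at key
  simp only at key
  linarith

private lemma key0' (c s t : ℝ) (h : c^2 + s^2 ≤ 1) (ht0 : 0 ≤ t) (htπ : t ≤ π) :
    Real.arccos (c * Real.cos t + s * Real.sin t) ^ 2 ≤
      Real.arccos c ^ 2 - 2 * t * (Real.arccos c / Real.sqrt (1 - c^2) * s) + t^2 := by
  have hc1 : c^2 ≤ 1 := by nlinarith
  have hcl : -1 ≤ c := by nlinarith
  have hcu : c ≤ 1 := by nlinarith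
  set r : ℝ := Real.arccos c with hr
  have hr0 : 0 ≤ r := Real.arccos_nonneg c
  have hrπ : r ≤ π := Real.arccos_le_pi c
  have hcos : Real.cos r = c := Real.cos_arccos hcl hcu
  have hsin : Real.sin r = Real.sqrt (1 - c^2) := Real.sin_arccos c
  by_cases hdeg : 1 - c^2 = 0
  · have hs : s = 0 := by nlinarith
    subst hs
    have hc2 : (c - 1) * (c + 1) = 0 := by nlinarith
    rcases mul_eq_zero.mp hc2 with h1 | h1
    · have hc : c = 1 := by linarith
      subst hc
      have hr1 : r = 0 := by rw [hr, Real.arccos_one]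
      rw [hr1]
      simp only [one_mul, zero_mul, add_zero, mul_zero]
      rw [Real.arccos_cos ht0 htπ]
      nlinarith
    · have hc : c = -1 := by linarith
      subst hc
      have hr1 : r = π := by rw [hr, Real.arccos_neg_one]
      rw [hr1]
      simp only [neg_one_mul, zero_mul, add_zero, mul_zero]
      rw [show -Real.cos t = -(Real.cos t) by ring, Real.arccos_neg,
        Real.arccos_cos ht0 htπ]
      nlinarith [Real.pi_pos]
  · have h1c : 0 < 1 - c^2 := lt_of_le_of_ne (by nlinarith) (Ne.symm hdeg)
    have hsinpos : 0 < Real.sin r := by rw [hsin]; positivity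
    set z : ℝ := s / Real.sin r with hz
    have hsz : s = z * Real.sin r := by rw [hz, div_mul_cancel₀ _ hsinpos.ne']
    have hz1 : z^2 ≤ 1 := by
      rw [hz, div_pow, div_le_one (by positivity)]
      have : Real.sin r ^ 2 = 1 - c^2 := by
        rw [hsin, Real.sq_sqrt h1c.le]
      rw [this]; nlinarith
    have hzl : -1 ≤ z := by nlinarith
    have hzu : z ≤ 1 := by nlinarith
    have hrpos : 0 < r := by
      rcases eq_or_lt_of_le hr0 with h | h
      · exfalso; rw [← h] at hsinpos; simp at hsinpos
      · exact h
    have hGterm : Real.arccos c / Real.sqrt (1 - c^2) * s = r * z := by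
      rw [← hsin, hz]; field_simp; rw [hr]; ring
    rw [hGterm, ← hcos]
    rcases eq_or_lt_of_le ht0 with h | htpos
    · rw [← h]; simp [hcos, hr]; rw [Real.arccos_cos (Real.arccos_nonneg c) (Real.arccos_le_pi c)]
    set W : ℝ := r^2 - 2*t*(r*z) + t^2 with hW
    have hWlb : (r-t)^2 ≤ W := by
      nlinarith [mul_nonneg (mul_nonneg hrpos.le htpos.le) (sub_nonneg.2 hzu)]
    have hWub : W ≤ (r+t)^2 := by
      nlinarith [mul_nonneg (mul_nonneg hrpos.le htpos.le) (by linarith : (0:ℝ) ≤ 1 + z)]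
    have hW0 : 0 ≤ W := le_trans (sq_nonneg _) hWlb
    rcases le_or_gt (π^2) W with hbig | hsmall
    · have h1 := Real.arccos_le_pi (Real.cos r * Real.cos t + s * Real.sin t)
      have h0 := Real.arccos_nonneg (Real.cos r * Real.cos t + s * Real.sin t)
      exact le_trans (pow_le_pow_left₀ h0 h1 2) hbig
    · set w : ℝ := Real.sqrt W with hw
      have hw2 : w^2 = W := Real.sq_sqrt hW0
      have hwπ : w ≤ π := by
        rw [hw]
        apply Real.sqrt_le_sqrt hsmall.le |>.trans
        rw [Real.sqrt_sq Real.pi_pos.le]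
      have hwlo : |r - t| ≤ w := by
        rw [hw, ← Real.sqrt_sq_eq_abs]
        exact Real.sqrt_le_sqrt hWlb
      have hwhi : w ≤ r + t := by
        rw [hw, ← Real.sqrt_sq (by positivity : (0:ℝ) ≤ r + t)]
        exact Real.sqrt_le_sqrt hWub
      have hzeq : (r^2 + t^2 - w^2) / (2*r*t) = z := by
        rw [hw2, hW]; field_simp; ring
      have hcosw := G_nonneg' hrpos hrπ htpos htπ hwlo hwhi hwπ
      rw [hzeq] at hcosw
      have hinner : Real.cos r * Real.cos t + s * Real.sin t
          = Real.cos r * Real.cos t + Real.sin r * Real.sin t * z := by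
        rw [hsz]; ring
      have harc : Real.arccos (Real.cos r * Real.cos t + s * Real.sin t) ≤ w := by
        rw [hinner]
        calc Real.arccos (Real.cos r * Real.cos t + Real.sin r * Real.sin t * z)
            ≤ Real.arccos (Real.cos w) := by
              simp only [Real.arccos_eq_pi_div_two_sub_arcsin]
              have := Real.monotone_arcsin hcosw
              linarith
          _ = w := Real.arccos_cos (Real.sqrt_nonneg _) hwπ
      have h0 := Real.arccos_nonneg (Real.cos r * Real.cos t + s * Real.sin t)
      have hw0 : 0 ≤ w := Real.sqrt_nonneg _
      calc Real.arccos (Real.cos r * Real.cos t + s * Real.sin t) ^ 2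
          ≤ w ^ 2 := pow_le_pow_left₀ h0 harc 2
        _ = W := hw2

private lemma key' (c s t : ℝ) (h : c^2 + s^2 ≤ 1) (ht : |t| ≤ π) :
    Real.arccos (c * Real.cos t + s * Real.sin t) ^ 2 ≤
      Real.arccos c ^ 2 - 2 * t * (Real.arccos c / Real.sqrt (1 - c^2) * s) + t^2 := by
  rcases le_total 0 t with h0 | h0
  · exact key0' c s t h h0 (by rwa [abs_of_nonneg h0] at ht)
  · have h' : c^2 + (-s)^2 ≤ 1 := by nlinarith
    have := key0' c (-s) (-t) h' (by linarith) (by rwa [abs_of_nonpos h0] at ht)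
    have e1 : c * Real.cos (-t) + (-s) * Real.sin (-t) = c * Real.cos t + s * Real.sin t := by
      rw [Real.cos_neg, Real.sin_neg]; ring
    rw [e1] at this
    calc Real.arccos (c * Real.cos t + s * Real.sin t) ^ 2
        ≤ Real.arccos c ^ 2 - 2 * (-t) * (Real.arccos c / Real.sqrt (1 - c^2) * (-s)) + (-t)^2 :=
          this
      _ = Real.arccos c ^ 2 - 2 * t * (Real.arccos c / Real.sqrt (1 - c^2) * s) + t^2 := by
          ring

end ScalarLemmas

lemma norm_geo' (μ v : H) (hμS : ‖μ‖ = 1) (hv : ‖v‖ = 1) (hvμ : ⟪μ, v⟫_ℝ = 0) (t : ℝ) :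
    ‖Real.cos t • μ + Real.sin t • v‖ = 1 := by
  have h2 : ‖Real.cos t • μ + Real.sin t • v‖ ^ 2 = 1 := by
    rw [norm_add_sq_real, norm_smul, norm_smul, real_inner_smul_left, real_inner_smul_right,
      hvμ, hμS, hv, Real.norm_eq_abs, Real.norm_eq_abs]
    rw [mul_one, mul_one, mul_zero, mul_zero]
    rw [show (2:ℝ) * 0 = 0 by ring, add_zero, sq_abs, sq_abs]
    nlinarith [Real.sin_sq_add_cos_sq t]
  nlinarith [norm_nonneg (Real.cos t • μ + Real.sin t • v)]

lemma pointwise_key' (μ v x : H) (hμS : ‖μ‖ = 1) (hxS : ‖x‖ = 1) (hv : ‖v‖ = 1)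
    (hvμ : ⟪μ, v⟫_ℝ = 0) (t : ℝ) (ht : |t| ≤ Real.pi) :
    rho x (Real.cos t • μ + Real.sin t • v) ^ 2 ≤
      rho x μ ^ 2 - 2 * t * ⟪v, logS μ x⟫_ℝ + t ^ 2 := by
  set c : ℝ := ⟪μ, x⟫_ℝ with hc
  set s : ℝ := ⟪x, v⟫_ℝ with hs
  set u : H := x - c • μ with hu
  have h1 : ⟪x, Real.cos t • μ + Real.sin t • v⟫_ℝ = c * Real.cos t + s * Real.sin t := by
    rw [inner_add_right, real_inner_smul_right, real_inner_smul_right, hc,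
      real_inner_comm μ x]
    ring
  have h2 : ‖u‖ ^ 2 = 1 - c ^ 2 := by
    rw [hu, norm_sub_sq_real, real_inner_smul_right, norm_smul, hc, real_inner_comm μ x,
      hxS, Real.norm_eq_abs, hμS]
    ring_nf
    rw [sq_abs]
    ring
  have h3 : ⟪v, u⟫_ℝ = s := by
    have e1 : ⟪v, x⟫_ℝ = s := by rw [hs]; exact real_inner_comm x v
    have e2 : ⟪v, μ⟫_ℝ = 0 := by rw [real_inner_comm]; exact hvμ
    rw [hu, inner_sub_right, real_inner_smul_right, e1, e2]
    ring
  have h4 : s ^ 2 ≤ ‖u‖ ^ 2 := by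
    have := abs_real_inner_le_norm v u
    rw [h3, hv, one_mul] at this
    calc s ^ 2 = |s| ^ 2 := (sq_abs s).symm
      _ ≤ ‖u‖ ^ 2 := pow_le_pow_left₀ (abs_nonneg s) this 2
  have h5 : ⟪v, logS μ x⟫_ℝ = Real.arccos c / ‖u‖ * s := by
    rw [logS, real_inner_smul_right, ← hc, ← hu, h3]
  have h6 : ‖u‖ = Real.sqrt (1 - c ^ 2) := by
    rw [← h2, Real.sqrt_sq (norm_nonneg u)]
  have hcs : c ^ 2 + s ^ 2 ≤ 1 := by nlinarith
  have hrx : rho x μ = Real.arccos c := by rw [rho, hc, real_inner_comm μ x]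
  rw [rho, h1, hrx, h5, h6]
  exact key' c s t hcs ht

/-- the tangent vector `V = log_μ X` at the Fréchet mean has
Bochner mean zero in `H`. -/
theorem tangent_vector_mean_zero [CompleteSpace H] [TopologicalSpace.SeparableSpace H]
    [MeasurableSpace H] [BorelSpace H]
    {Ω : Type*} [MeasurableSpace Ω] (P : Measure Ω) [IsProbabilityMeasure P]
    (X : Ω → H) (hX : Measurable X) (hXS : ∀ ω, ‖X ω‖ = 1)
    -- μ is a Fréchet mean of X
    (μ : H) (hμS : ‖μ‖ = 1)
    (hμmin : ∀ p : H, ‖p‖ = 1 →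
      (∫ ω, rho (X ω) μ ^ 2 ∂P) ≤ ∫ ω, rho (X ω) p ^ 2 ∂P)
    (hπ : P {ω | rho μ (X ω) = Real.pi} = 0) :
    (∫ ω, logS μ (X ω) ∂P) = 0 := by
  haveI : SecondCountableTopology H := UniformSpace.secondCountable_of_separable H
  set L : Ω → H := fun ω => logS μ (X ω) with hL
  have hLmeas : Measurable L := by
    have hi : Measurable fun ω => ⟪μ, X ω⟫_ℝ :=
      (Continuous.inner continuous_const continuous_id).measurable.comp hX
    have hu : Measurable fun ω => X ω - ⟪μ, X ω⟫_ℝ • μ :=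
      hX.sub (hi.smul_const μ)
    have hnorm : Measurable fun ω => ‖X ω - ⟪μ, X ω⟫_ℝ • μ‖ := hu.norm
    have harc : Measurable fun ω => Real.arccos ⟪μ, X ω⟫_ℝ :=
      Real.continuous_arccos.measurable.comp hi
    exact (harc.div hnorm).smul hu
  have hLbd : ∀ ω, ‖L ω‖ ≤ Real.pi := by
    intro ω
    rw [hL]
    simp only [logS, norm_smul]
    by_cases hu : ‖X ω - ⟪μ, X ω⟫_ℝ • μ‖ = 0
    · rw [hu, mul_zero]; exact Real.pi_pos.le
    · rw [Real.norm_eq_abs, abs_div, abs_of_nonneg (Real.arccos_nonneg _),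
        abs_of_nonneg (norm_nonneg _), div_mul_cancel₀ _ hu]
      exact Real.arccos_le_pi _
  have hLint : Integrable L P :=
    Integrable.mono' (integrable_const Real.pi) hLmeas.aestronglyMeasurable
      (Filter.Eventually.of_forall hLbd)
  have hLμ : ∀ ω, ⟪μ, L ω⟫_ℝ = 0 := by
    intro ω
    rw [hL]
    simp only [logS, real_inner_smul_right]
    have h0 : ⟪μ, X ω - ⟪μ, X ω⟫_ℝ • μ⟫_ℝ = 0 := by
      rw [inner_sub_right, real_inner_smul_right, real_inner_self_eq_norm_sq, hμS]
      ring
    rw [h0, mul_zero]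
  have hrho_int : ∀ p : H, Integrable (fun ω => rho (X ω) p ^ 2) P := by
    intro p
    have hm : Measurable fun ω => rho (X ω) p ^ 2 := by
      have : Measurable fun ω => ⟪X ω, p⟫_ℝ :=
        (Continuous.inner continuous_id continuous_const).measurable.comp hX
      exact (Real.continuous_arccos.measurable.comp this).pow_const 2
    apply Integrable.mono' (integrable_const (Real.pi ^ 2)) hm.aestronglyMeasurable
    apply Filter.Eventually.of_forall
    intro ω
    rw [Real.norm_eq_abs, abs_of_nonneg (by positivity)]
    exact pow_le_pow_left₀ (Real.arccos_nonneg _) (Real.arccos_le_pi _) 2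
  have main : ∀ v : H, ‖v‖ = 1 → ⟪μ, v⟫_ℝ = 0 → (∫ ω, ⟪v, L ω⟫_ℝ ∂P) ≤ 0 := by
    intro v hv hvμ
    have hEint : Integrable (fun ω => ⟪v, L ω⟫_ℝ) P := hLint.const_inner v
    have step : ∀ t : ℝ, 0 < t → t ≤ Real.pi → (∫ ω, ⟪v, L ω⟫_ℝ ∂P) ≤ t / 2 := by
      intro t ht ht'
      set γ : H := Real.cos t • μ + Real.sin t • v with hγdef
      have hγ : ‖γ‖ = 1 := norm_geo' μ v hμS hv hvμ t
      have hpt : ∀ ω, rho (X ω) γ ^ 2 ≤ rho (X ω) μ ^ 2 - 2 * t * ⟪v, L ω⟫_ℝ + t ^ 2 :=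
        fun ω => pointwise_key' μ v (X ω) hμS (hXS ω) hv hvμ t
          (by rw [abs_of_pos ht]; exact ht')
      have hint2 : Integrable (fun ω => rho (X ω) μ ^ 2 - 2 * t * ⟪v, L ω⟫_ℝ + t ^ 2) P :=
        ((hrho_int μ).sub (hEint.const_mul (2 * t))).add (integrable_const (t ^ 2))
      have hineq1 := hμmin γ hγ
      have hineq2 : (∫ ω, rho (X ω) γ ^ 2 ∂P) ≤
          ∫ ω, (rho (X ω) μ ^ 2 - 2 * t * ⟪v, L ω⟫_ℝ + t ^ 2) ∂P :=
        integral_mono (hrho_int γ) hint2 hpt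
      have hcomp : (∫ ω, (rho (X ω) μ ^ 2 - 2 * t * ⟪v, L ω⟫_ℝ + t ^ 2) ∂P)
          = (∫ ω, rho (X ω) μ ^ 2 ∂P) - 2 * t * (∫ ω, ⟪v, L ω⟫_ℝ ∂P) + t ^ 2 := by
        have h1i : Integrable (fun ω => rho (X ω) μ ^ 2 - 2 * t * ⟪v, L ω⟫_ℝ) P :=
          (hrho_int μ).sub (hEint.const_mul (2 * t))
        rw [integral_add h1i (integrable_const _),
          integral_sub (hrho_int μ) (hEint.const_mul (2 * t)),
          MeasureTheory.integral_const_mul, integral_const]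
        simp [measure_univ]
      have := hineq1.trans (hineq2.trans_eq hcomp)
      nlinarith [this]
    by_contra hE
    push_neg at hE
    set E : ℝ := ∫ ω, ⟪v, L ω⟫_ℝ ∂P with hEdef
    have ht0 : 0 < min Real.pi E := lt_min Real.pi_pos hE
    have := step (min Real.pi E) ht0 (min_le_left _ _)
    have h2 : min Real.pi E ≤ E := min_le_right _ _
    linarith
  have main2 : ∀ w : H, ⟪μ, w⟫_ℝ = 0 → (∫ ω, ⟪w, L ω⟫_ℝ ∂P) = 0 := by
    intro w hw
    rcases eq_or_ne w 0 with h0 | h0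
    · simp [h0]
    · set v : H := ‖w‖⁻¹ • w with hvdef
      have hv : ‖v‖ = 1 := norm_smul_inv_norm h0
      have hvμ : ⟪μ, v⟫_ℝ = 0 := by rw [hvdef, real_inner_smul_right, hw, mul_zero]
      have h1 := main v hv hvμ
      have h2 := main (-v) (by rw [norm_neg]; exact hv) (by rw [inner_neg_right, hvμ, neg_zero])
      have heq : (fun ω => ⟪-v, L ω⟫_ℝ) = fun ω => -⟪v, L ω⟫_ℝ := by
        funext ω; rw [inner_neg_left]
      rw [heq, integral_neg] at h2
      have hEv : (∫ ω, ⟪v, L ω⟫_ℝ ∂P) = 0 := le_antisymm h1 (by linarith [h2])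
      have hwv : ∀ y : H, ⟪w, y⟫_ℝ = ‖w‖ * ⟪v, y⟫_ℝ := by
        intro y
        rw [hvdef, real_inner_smul_left]
        have : ‖w‖ ≠ 0 := norm_ne_zero_iff.2 h0
        field_simp
      calc (∫ ω, ⟪w, L ω⟫_ℝ ∂P) = ∫ ω, ‖w‖ * ⟪v, L ω⟫_ℝ ∂P := by
            congr 1; funext ω; exact hwv (L ω)
        _ = ‖w‖ * ∫ ω, ⟪v, L ω⟫_ℝ ∂P := MeasureTheory.integral_const_mul _ _
        _ = 0 := by rw [hEv, mul_zero]
  apply integral_eq_zero_of_forall_integral_inner_eq_zero ℝ L hLint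
  intro wc
  set a : ℝ := ⟪μ, wc⟫_ℝ with ha
  have hwt : ⟪μ, wc - a • μ⟫_ℝ = 0 := by
    rw [inner_sub_right, real_inner_smul_right, real_inner_self_eq_norm_sq, hμS]
    ring
  have hdec : ∀ ω, ⟪wc, L ω⟫_ℝ = ⟪wc - a • μ, L ω⟫_ℝ := by
    intro ω
    rw [inner_sub_left, real_inner_smul_left, hLμ ω, mul_zero, sub_zero]
  calc (∫ ω, ⟪wc, L ω⟫_ℝ ∂P) = ∫ ω, ⟪wc - a • μ, L ω⟫_ℝ ∂P := by
        congr 1; funext ω; exact hdec ω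
    _ = 0 := main2 _ hwt
end
end

section
/- Let p, x ∈ S with ρ(x, p) < π, and define g_x : T_p → ℝ by g_x(v) = ρ(x, exp_p v)². Then g_x is Fréchet differentiable at 0 and its derivative is Dg_x(0)(w) = −2⟨log_p x, w⟩ for w ∈ T_p. -/
open MeasureTheory ProbabilityTheory Filter
open scoped InnerProductSpace Topology BigOperators

noncomputable section

variable {H : Type*} [NormedAddCommGroup H] [InnerProductSpace ℝ H]

lemma normSq_isLittleO (p : H) :
    (fun h : Tp p => ‖h‖ ^ 2) =o[𝓝 0] fun h : Tp p => h := by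
  rw [Asymptotics.isLittleO_iff]
  intro ε hε
  filter_upwards [Metric.ball_mem_nhds (0 : Tp p) hε] with h hh
  rw [Metric.mem_ball, dist_zero_right] at hh
  have h0 : (0:ℝ) ≤ ‖h‖ := norm_nonneg _
  rw [Real.norm_eq_abs, abs_of_nonneg (by positivity)]
  nlinarith [hh.le]

lemma expS_zero_eq (p : H) : expS p (0 : H) = p := by
  simp [expS]

lemma inner_expS_hasFDerivAt (p x : H) (hp : ‖p‖ = 1) (hx : ‖x‖ = 1) :
    HasFDerivAt (fun v : Tp p => ⟪x, expS p (v : H)⟫_ℝ)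
      ((innerSL ℝ x).comp (Tp p).subtypeL) 0 := by
  rw [hasFDerivAt_iff_isLittleO_nhds_zero]
  refine Asymptotics.IsBigO.trans_isLittleO ?_ (normSq_isLittleO p)
  rw [Asymptotics.isBigO_iff]
  refine ⟨1, ?_⟩
  filter_upwards [Metric.ball_mem_nhds (0 : Tp p) one_pos] with h hh
  rw [Metric.mem_ball, dist_zero_right] at hh
  have hco : ‖h‖ = ‖(h : H)‖ := rfl
  have ha : |⟪x, p⟫_ℝ| ≤ 1 := by
    have := abs_real_inner_le_norm x p
    rwa [hp, hx, one_mul] at this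
  have hb : |⟪x, (h : H)⟫_ℝ| ≤ ‖(h : H)‖ := by
    have := abs_real_inner_le_norm x (h : H)
    rwa [hx, one_mul] at this
  simp only [zero_add, expS, inner_add_right, real_inner_smul_right,
    ZeroMemClass.coe_zero, norm_zero, Real.cos_zero, Real.sin_zero, zero_div, one_smul,
    inner_zero_right, mul_zero, add_zero, one_mul, ContinuousLinearMap.coe_comp',
    Function.comp_apply, Submodule.coe_subtypeL', Submodule.coe_subtype, innerSL_apply_apply,
    innerSL_apply_apply]
  rcases eq_or_lt_of_le (norm_nonneg (h : H)) with h0 | h0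
  · rw [norm_eq_zero.mp h0.symm]
    simp [hco, ← h0]
  · set t := ‖(h : H)‖ with ht
    have ht1 : t < 1 := by rwa [hco] at hh
    have hcos : 1 - t ^ 2 / 2 ≤ Real.cos t := Real.one_sub_sq_div_two_le_cos
    have hcos1 : Real.cos t ≤ 1 := Real.cos_le_one t
    have hsinlt : Real.sin t ≤ t := Real.sin_le h0.le
    have hsingt : t - t ^ 3 / 4 < Real.sin t := (by have := pow_pos h0 3; linarith : t - t ^ 3 / 4 ≤ t - t ^ 3 / 6).trans_lt
        (Real.sin_gt_sub_cube h0)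
    have e1 : |Real.cos t - 1| ≤ t ^ 2 / 2 := by
      rw [abs_of_nonpos (by linarith)]; linarith
    have e2 : |Real.sin t / t - 1| ≤ t ^ 2 / 4 := by
      have h4 : 1 - t ^ 2 / 4 ≤ Real.sin t / t := by
        rw [le_div_iff₀ h0]; nlinarith
      have h5 : Real.sin t / t ≤ 1 := (div_le_one h0).mpr hsinlt
      rw [abs_le]; constructor <;> linarith
    have key : |Real.cos t * ⟪x, p⟫_ℝ + Real.sin t / t * ⟪x, (h:H)⟫_ℝ - ⟪x, p⟫_ℝ -
        ⟪x, (h:H)⟫_ℝ| ≤ t ^ 2 := by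
      calc |Real.cos t * ⟪x, p⟫_ℝ + Real.sin t / t * ⟪x, (h:H)⟫_ℝ - ⟪x, p⟫_ℝ -
            ⟪x, (h:H)⟫_ℝ|
          = |(Real.cos t - 1) * ⟪x, p⟫_ℝ + (Real.sin t / t - 1) * ⟪x, (h:H)⟫_ℝ| := by
            ring_nf
        _ ≤ |(Real.cos t - 1) * ⟪x, p⟫_ℝ| + |(Real.sin t / t - 1) * ⟪x, (h:H)⟫_ℝ| :=
            abs_add_le _ _
        _ = |Real.cos t - 1| * |⟪x, p⟫_ℝ| + |Real.sin t / t - 1| * |⟪x, (h:H)⟫_ℝ| := by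
            rw [abs_mul, abs_mul]
        _ ≤ t ^ 2 := by
            nlinarith [mul_le_mul e1 ha (abs_nonneg _) (by positivity : (0:ℝ) ≤ t ^ 2 / 2),
              mul_le_mul e2 hb (abs_nonneg _) (by positivity : (0:ℝ) ≤ t ^ 2 / 4)]
    rw [Real.norm_eq_abs, Real.norm_eq_abs, hco,
      abs_of_nonneg (by positivity : (0:ℝ) ≤ t ^ 2)]
    exact key

/-- `g_x(v) = ρ(x, exp_p v)²` is Fréchet differentiable at `0` with
derivative `w ↦ −2⟨log_p x, w⟩`. -/
theorem gfun_hasFDerivAt_zero [CompleteSpace H] (p x : H) (hp : ‖p‖ = 1) (hx : ‖x‖ = 1)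
    (hd : rho x p < Real.pi) :
    HasFDerivAt (gfun p x)
      ((-2 : ℝ) • ((innerSL ℝ (logS p x)).comp (Tp p).subtypeL)) 0 := by
  have ha1 : ⟪x, p⟫_ℝ ≤ 1 := by
    have := real_inner_le_norm x p; rwa [hp, hx, one_mul] at this
  have hagt : -1 < ⟪x, p⟫_ℝ := by
    by_contra hle
    push_neg at hle
    have hge : -1 ≤ ⟪x, p⟫_ℝ := by
      have := abs_real_inner_le_norm x p; rw [hp, hx, one_mul] at this
      linarith [neg_abs_le (⟪x, p⟫_ℝ)]
    have : ⟪x, p⟫_ℝ = -1 := le_antisymm hle hge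
    rw [rho, this, Real.arccos_neg_one] at hd
    exact lt_irrefl _ hd
  rcases eq_or_lt_of_le ha1 with heq | hlt
  · -- case ⟪x,p⟫ = 1, so x = p
    have hxp : x = p := (inner_eq_one_iff_of_norm_eq_one hx hp).mp heq
    have hlog : logS p x = 0 := by
      have hu : x - ⟪p, x⟫_ℝ • p = 0 := by
        rw [real_inner_comm, heq, one_smul, hxp, sub_self]
      rw [logS, hu, smul_zero]
    rw [hlog]
    have hzero : (-2 : ℝ) • ((innerSL ℝ (0:H)).comp (Tp p).subtypeL) = 0 := by
      ext w; simp
    rw [hzero]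
    have hsq : HasFDerivAt (fun v : Tp p => ‖v‖ ^ 2) (0 : Tp p →L[ℝ] ℝ) 0 := by
      rw [hasFDerivAt_iff_isLittleO_nhds_zero]
      simpa using normSq_isLittleO p
    refine hsq.congr_of_eventuallyEq ?_
    filter_upwards [Metric.ball_mem_nhds (0 : Tp p) Real.pi_pos] with v hv
    rw [Metric.mem_ball, dist_zero_right] at hv
    have hpv : ⟪p, (v : H)⟫_ℝ = 0 := by
      exact Submodule.mem_orthogonal_singleton_iff_inner_right.mp v.2
    have hxv : ⟪x, (v : H)⟫_ℝ = 0 := by rw [hxp]; exact hpv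
    have hco : ‖v‖ = ‖(v : H)‖ := rfl
    have hinner : ⟪x, expS p (v : H)⟫_ℝ = Real.cos ‖(v : H)‖ := by
      simp [expS, inner_add_right, real_inner_smul_right, heq, hxv]
    rw [gfun, rho, hinner, ← hco, Real.arccos_cos (norm_nonneg _) hv.le]
  · -- case -1 < ⟪x,p⟫ < 1
    set a := ⟪x, p⟫_ℝ with haa
    have hne1 : a ≠ 1 := ne_of_lt hlt
    have hnem1 : a ≠ -1 := ne_of_gt hagt
    have hsqrtpos : 0 < Real.sqrt (1 - a ^ 2) := by
      apply Real.sqrt_pos.mpr; nlinarith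
    have harc : HasDerivAt (fun t => Real.arccos t ^ 2)
        (2 * Real.arccos a ^ 1 * (-(1 / Real.sqrt (1 - a ^ 2)))) a :=
      (Real.hasDerivAt_arccos hnem1 hne1).pow 2
    have h0 : ⟪x, expS p (((0 : Tp p)) : H)⟫_ℝ = a := by
      simp [expS_zero_eq]
      exact haa.symm
    have hc := inner_expS_hasFDerivAt p x hp hx
    rw [← h0] at harc
    have hcomp := harc.comp_hasFDerivAt (0 : Tp p) hc
    rw [h0] at hcomp
    have hgoal : (2 * Real.arccos a ^ 1 * (-(1 / Real.sqrt (1 - a ^ 2)))) •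
        ((innerSL ℝ x).comp (Tp p).subtypeL)
        = (-2 : ℝ) • ((innerSL ℝ (logS p x)).comp (Tp p).subtypeL) := by
      have hpx : ⟪p, x⟫_ℝ = a := by rw [haa, real_inner_comm]
      have hsq2 : ‖x - a • p‖ ^ 2 = 1 - a ^ 2 := by
        rw [norm_sub_sq_real, real_inner_smul_right, norm_smul, hx, hp, mul_one,
          Real.norm_eq_abs, ← haa, sq_abs]
        ring
      have hnu : ‖x - ⟪p, x⟫_ℝ • p‖ = Real.sqrt (1 - a ^ 2) := by
        rw [hpx, ← hsq2, Real.sqrt_sq (norm_nonneg _)]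
      ext w
      have hpw : ⟪p, (w : H)⟫_ℝ = 0 := by
        exact Submodule.mem_orthogonal_singleton_iff_inner_right.mp w.2
      simp only [ContinuousLinearMap.coe_smul', Pi.smul_apply,
        ContinuousLinearMap.coe_comp', Function.comp_apply, Submodule.coe_subtypeL',
        Submodule.coe_subtype, innerSL_apply_apply, smul_eq_mul]
      rw [logS, real_inner_smul_left, hnu, hpx, inner_sub_left, real_inner_smul_left, hpw,
        mul_zero, sub_zero, pow_one]
      ring
    rw [hgoal] at hcomp
    exact hcomp
end
end

section
/- Let p, x ∈ S. The map v ↦ ρ(x, exp_p v)² from T_p to ℝ is twice continuously Fréchet differentiable on the open set {v ∈ T_p : ‖v‖ < π and exp_p v ≠ −x}. -/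
open MeasureTheory ProbabilityTheory Filter
open scoped InnerProductSpace Topology BigOperators

noncomputable section

variable {H : Type*} [NormedAddCommGroup H] [InnerProductSpace ℝ H]

/-! ### Auxiliary analytic functions: `Fc s = cos √s`, `Gc s = sin √s / √s` -/

open FormalMultilinearSeries
open scoped Nat

/-- coefficients of the power series of `cos √s` -/
def cc : ℕ → ℝ := fun n => (-1) ^ n / (2 * n)!

/-- coefficients of the power series of `sin √s / √s` -/
def sc : ℕ → ℝ := fun n => (-1) ^ n / (2 * n + 1)!

def Fc : ℝ → ℝ := ofScalarsSum cc
def Gc : ℝ → ℝ := ofScalarsSum sc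

lemma summable_aux (c : ℕ → ℝ) (hc : ∀ n, |c n| ≤ 1 / n !) (r : NNReal) :
    Summable fun n => ‖ofScalars ℝ c n‖ * (r : ℝ) ^ n := by
  refine Summable.of_nonneg_of_le (fun n => by positivity) (fun n => ?_)
    (Real.summable_pow_div_factorial r)
  rw [ofScalars_norm]
  calc ‖c n‖ * (r:ℝ) ^ n ≤ (1 / n !) * (r:ℝ) ^ n := by
        gcongr; exact hc n
    _ = (r:ℝ) ^ n / n ! := by ring

lemma cc_abs (n : ℕ) : |cc n| ≤ 1 / n ! := by
  rw [cc, abs_div, abs_pow, abs_neg, abs_one, one_pow]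
  rw [abs_of_nonneg (by positivity)]
  exact one_div_le_one_div_of_le (by positivity)
    (by exact_mod_cast Nat.factorial_le (by omega))

lemma sc_abs (n : ℕ) : |sc n| ≤ 1 / n ! := by
  rw [sc, abs_div, abs_pow, abs_neg, abs_one, one_pow]
  rw [abs_of_nonneg (by positivity)]
  exact one_div_le_one_div_of_le (by positivity)
    (by exact_mod_cast Nat.factorial_le (by omega))

lemma cc_radius : (ofScalars ℝ cc).radius = ⊤ :=
  radius_eq_top_of_summable_norm _ (summable_aux cc cc_abs)

lemma sc_radius : (ofScalars ℝ sc).radius = ⊤ :=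
  radius_eq_top_of_summable_norm _ (summable_aux sc sc_abs)

lemma Fc_analyticAt (s : ℝ) : AnalyticAt ℝ Fc s := by
  have h := (ofScalars ℝ cc).hasFPowerSeriesOnBall (by rw [cc_radius]; exact ENNReal.zero_lt_top)
  rw [cc_radius] at h
  exact (h.analyticAt_of_mem (by simp)).congr (by rfl)

lemma Gc_analyticAt (s : ℝ) : AnalyticAt ℝ Gc s := by
  have h := (ofScalars ℝ sc).hasFPowerSeriesOnBall (by rw [sc_radius]; exact ENNReal.zero_lt_top)
  rw [sc_radius] at h
  exact (h.analyticAt_of_mem (by simp)).congr (by rfl)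

lemma Fc_eq_cos_sqrt {s : ℝ} (hs : 0 ≤ s) : Fc s = Real.cos (Real.sqrt s) := by
  rw [Fc, ofScalars_sum_eq, Real.cos_eq_tsum]
  refine tsum_congr fun n => ?_
  rw [smul_eq_mul, cc, pow_mul, Real.sq_sqrt hs]
  ring

lemma Fc_zero : Fc 0 = 1 := by
  have := Fc_eq_cos_sqrt (le_refl (0:ℝ))
  simpa using this

lemma Gc_eq {y : ℝ} (hy : y ≠ 0) : Gc (y ^ 2) = Real.sin y / y := by
  rw [Gc, ofScalars_sum_eq, Real.sin_eq_tsum, ← tsum_div_const]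
  refine tsum_congr fun n => ?_
  rw [smul_eq_mul, sc, ← pow_mul]
  have : y ^ (2 * n + 1) = y ^ (2 * n) * y := by ring
  rw [this]
  field_simp

lemma Fc_gt_one {s : ℝ} (hs : s < 0) : 1 < Fc s := by
  have hterm : ∀ n, cc n • s ^ n = (-s) ^ n / (2 * n)! := by
    intro n
    rw [smul_eq_mul, cc, neg_pow]
    ring
  have hns : (0:ℝ) ≤ -s := by linarith
  have hsum : Summable fun n => (-s) ^ n / ((2 * n)! : ℝ) := by
    refine Summable.of_nonneg_of_le (fun n => by positivity) (fun n => ?_)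
      (Real.summable_pow_div_factorial (-s))
    exact div_le_div_of_nonneg_left (pow_nonneg hns n) (by positivity)
      (by exact_mod_cast Nat.factorial_le (by omega))
  have h2 : ∑ n ∈ Finset.range 2, (-s) ^ n / ((2 * n)! : ℝ) ≤ ∑' n, (-s) ^ n / ((2 * n)! : ℝ) :=
    Summable.sum_le_tsum _ (fun n _ => by positivity) hsum
  have hval : ∑ n ∈ Finset.range 2, (-s) ^ n / ((2 * n)! : ℝ) = 1 + (-s) / 2 := by
    simp [Finset.sum_range_succ]
  rw [Fc, ofScalars_sum_eq, tsum_congr hterm]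
  rw [hval] at h2
  linarith

/-- the scaling-by-(-1/2) continuous linear equivalence of ℝ -/
def negHalf : ℝ ≃L[ℝ] ℝ :=
  ContinuousLinearEquiv.unitsEquivAut ℝ (Units.mk0 (-1/2 : ℝ) (by norm_num))

lemma Fc_hasDerivAt : HasFDerivAt Fc (negHalf : ℝ →L[ℝ] ℝ) 0 := by
  have hball := (ofScalars ℝ cc).hasFPowerSeriesOnBall
    (by rw [cc_radius]; exact ENNReal.zero_lt_top)
  have hAt : HasFPowerSeriesAt Fc (ofScalars ℝ cc) 0 := hball.hasFPowerSeriesAt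
  have hd : deriv Fc 0 = (ofScalars ℝ cc).coeff 1 := hAt.deriv
  have hc : (ofScalars ℝ cc).coeff 1 = (-1/2 : ℝ) := by
    simp [FormalMultilinearSeries.coeff, ofScalars, cc]
  have hdiff : DifferentiableAt ℝ Fc 0 := (Fc_analyticAt 0).differentiableAt
  have := hdiff.hasDerivAt
  rw [hd, hc] at this
  have h2 := this.hasFDerivAt
  have he : (negHalf : ℝ →L[ℝ] ℝ) = ContinuousLinearMap.toSpanSingleton ℝ (-1/2) := by
    ext
    simp [negHalf]
  rw [he]
  exact h2

lemma arccos_sq_contDiffWithinAt :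
    ContDiffWithinAt ℝ 2 (fun t : ℝ => Real.arccos t ^ 2) (Set.Iic 1) 1 := by
  have hF2 : ContDiffAt ℝ 2 Fc 0 := (Fc_analyticAt 0).contDiffAt
  have hn : (2 : WithTop ℕ∞) ≠ 0 := by norm_num
  set g := hF2.localInverse Fc_hasDerivAt hn with hg
  have hs := hF2.hasStrictFDerivAt' Fc_hasDerivAt hn
  have hgdef : g = hs.localInverse Fc negHalf 0 := rfl
  have hg1 : g 1 = 0 := by
    have := hF2.localInverse_apply_image Fc_hasDerivAt hn
    rwa [Fc_zero] at this
  have hgC : ContDiffAt ℝ 2 g 1 := by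
    have := hF2.to_localInverse Fc_hasDerivAt hn
    rwa [Fc_zero] at this
  have hinv : ∀ᶠ t in 𝓝 (1:ℝ), Fc (g t) = t := by
    have := hs.eventually_right_inverse
    rwa [Fc_zero] at this
  have hsmall : ∀ᶠ t in 𝓝 (1:ℝ), g t < Real.pi ^ 2 := by
    have hc : ContinuousAt g 1 := hgC.continuousAt
    have : Set.Iio (Real.pi ^ 2) ∈ 𝓝 (g 1) := by
      rw [hg1]
      exact Iio_mem_nhds (by positivity)
    exact hc.eventually_mem this
  have key : ∀ᶠ t in 𝓝[Set.Iic 1] (1:ℝ), Real.arccos t ^ 2 = g t := by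
    filter_upwards [hinv.filter_mono nhdsWithin_le_nhds,
      hsmall.filter_mono nhdsWithin_le_nhds, self_mem_nhdsWithin] with t hFg hlt ht
    have ht1 : t ≤ 1 := ht
    have hgt0 : 0 ≤ g t := by
      by_contra hneg
      push_neg at hneg
      have := Fc_gt_one hneg
      rw [hFg] at this
      linarith
    have hsq : Real.sqrt (g t) ≤ Real.pi := by
      have h := Real.sqrt_lt_sqrt hgt0 hlt
      rw [Real.sqrt_sq Real.pi_pos.le] at h
      exact h.le
    have hcos : Real.cos (Real.sqrt (g t)) = t := by
      rw [← Fc_eq_cos_sqrt hgt0, hFg]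
    have harc := Real.arccos_cos (Real.sqrt_nonneg (g t)) hsq
    rw [hcos] at harc
    rw [harc, Real.sq_sqrt hgt0]
  refine (hgC.contDiffWithinAt).congr_of_eventuallyEq key ?_
  rw [Real.arccos_one, hg1]
  norm_num

/-! ### Geometry lemmas on the sphere -/

lemma expS_norm_one {p : H} (hp : ‖p‖ = 1) {w : H} (hw : ⟪p, w⟫_ℝ = 0) :
    ‖expS p w‖ = 1 := by
  rcases eq_or_ne w 0 with h | h
  · simp [expS, h, hp]
  · have hn : ‖w‖ ≠ 0 := norm_ne_zero_iff.2 h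
    have hsq : ‖expS p w‖ ^ 2 = 1 := by
      rw [expS, norm_add_sq_real, real_inner_smul_left, real_inner_smul_right, hw,
        norm_smul, norm_smul, mul_pow, mul_pow]
      rw [Real.norm_eq_abs, Real.norm_eq_abs, sq_abs, sq_abs, hp, div_pow]
      field_simp
      linear_combination ‖w‖ * Real.sin_sq_add_cos_sq ‖w‖
    rw [← Real.sqrt_sq (norm_nonneg (expS p w)), hsq, Real.sqrt_one]

lemma inner_expS_s10 (x p w : H) :
    ⟪x, expS p w⟫_ℝ = Fc (‖w‖ ^ 2) * ⟪x, p⟫_ℝ + Gc (‖w‖ ^ 2) * ⟪x, w⟫_ℝ := by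
  rcases eq_or_ne w 0 with h | h
  · simp [expS, h, Fc_zero]
  · have hn : ‖w‖ ≠ 0 := norm_ne_zero_iff.2 h
    rw [expS, inner_add_right, real_inner_smul_right, real_inner_smul_right]
    rw [Fc_eq_cos_sqrt (by positivity), Real.sqrt_sq (norm_nonneg w), Gc_eq hn]

lemma hfun_contDiffAt (p x : H) (v : Tp p) :
    ContDiffAt ℝ 2
      (fun w : Tp p => Fc (‖(w : H)‖ ^ 2) * ⟪x, p⟫_ℝ + Gc (‖(w : H)‖ ^ 2) * ⟪x, (w : H)⟫_ℝ)
      v := by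
  have hq : ContDiff ℝ 2 (fun w : Tp p => ‖(w : H)‖ ^ 2) := by
    simpa [Submodule.coe_norm] using
      (contDiff_norm_sq ℝ : ContDiff ℝ 2 fun w : Tp p => ‖w‖ ^ 2)
  have hcoe : ContDiff ℝ 2 (fun w : Tp p => (w : H)) := (Tp p).subtypeL.contDiff
  have hl : ContDiff ℝ 2 (fun w : Tp p => ⟪x, (w : H)⟫_ℝ) := contDiff_const.inner ℝ hcoe
  have hF : ContDiffAt ℝ 2 (fun w : Tp p => Fc (‖(w : H)‖ ^ 2)) v :=
    (Fc_analyticAt _).contDiffAt.comp v hq.contDiffAt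
  have hG : ContDiffAt ℝ 2 (fun w : Tp p => Gc (‖(w : H)‖ ^ 2)) v :=
    (Gc_analyticAt _).contDiffAt.comp v hq.contDiffAt
  exact (hF.mul contDiffAt_const).add (hG.mul hl.contDiffAt)


/-- `v ↦ ρ(x, exp_p v)²` is twice continuously Fréchet differentiable
on `{v ∈ T_p : ‖v‖ < π, exp_p v ≠ −x}`. -/
theorem gfun_contDiffOn [CompleteSpace H] (p x : H) (hp : ‖p‖ = 1) (hx : ‖x‖ = 1) :
    ContDiffOn ℝ 2 (gfun p x)
      {v : Tp p | ‖(v : H)‖ < Real.pi ∧ expS p (v : H) ≠ -x} := by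
  intro v hv
  obtain ⟨hvpi, hvne⟩ := hv
  set S := {v : Tp p | ‖(v : H)‖ < Real.pi ∧ expS p (v : H) ≠ -x} with hS
  have horth : ∀ w : Tp p, ⟪p, (w : H)⟫_ℝ = 0 := fun w =>
    Submodule.mem_orthogonal_singleton_iff_inner_right.1 w.2
  have hnorm : ∀ w : Tp p, ‖expS p (w : H)‖ = 1 := fun w => expS_norm_one hp (horth w)
  set h : Tp p → ℝ :=
    fun w => Fc (‖(w : H)‖ ^ 2) * ⟪x, p⟫_ℝ + Gc (‖(w : H)‖ ^ 2) * ⟪x, (w : H)⟫_ℝ with hh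
  have hinner : ∀ w : Tp p, ⟪x, expS p (w : H)⟫_ℝ = h w := fun w => inner_expS_s10 x p (w : H)
  have hfun : gfun p x = fun w : Tp p => Real.arccos (h w) ^ 2 := by
    funext w
    rw [gfun, rho, hinner]
  rw [hfun]
  have hle : ∀ w : Tp p, h w ≤ 1 := by
    intro w
    rw [← hinner]
    calc ⟪x, expS p (w : H)⟫_ℝ ≤ ‖x‖ * ‖expS p (w : H)‖ := real_inner_le_norm _ _
      _ = 1 := by rw [hx, hnorm w, mul_one]
  rcases lt_or_eq_of_le (hle v) with hlt | heq
  · -- interior case : -1 < h v < 1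
    have hne1 : h v ≠ 1 := ne_of_lt hlt
    have hnegne : h v ≠ -1 := by
      intro hcontra
      apply hvne
      have hinner1 : ⟪x, -expS p (v : H)⟫_ℝ = 1 := by
        rw [inner_neg_right, hinner, hcontra]; ring
      have := (inner_eq_one_iff_of_norm_eq_one hx (by rw [norm_neg, hnorm v])).1 hinner1
      rw [this, neg_neg]
    have hA : ContDiffAt ℝ 2 (fun t : ℝ => Real.arccos t ^ 2) (h v) :=
      (Real.contDiffAt_arccos hnegne hne1).pow 2
    exact (hA.comp v (hfun_contDiffAt p x v)).contDiffWithinAt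
  · -- boundary case : h v = 1
    have hA : ContDiffWithinAt ℝ 2 (fun t : ℝ => Real.arccos t ^ 2) (Set.Iic 1) (h v) := by
      rw [heq]
      exact arccos_sq_contDiffWithinAt
    have hmaps : Set.MapsTo h S (Set.Iic 1) := fun w _ => hle w
    exact hA.comp v (hfun_contDiffAt p x v).contDiffWithinAt hmaps
end
end
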